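/- arXiv:2303.08334 — 6 statements merged into one kernel-verified Lean document; each statement's English description precedes it below -/
import Mathlib

section
/- Let L, R, α, β be positive constants, let 0 < d < π/2, and assume F ∈ L^DE_{L,R,α,β}(D_d). Let μ = min{α,β}, let n be a positive integer, let h > 0, and set M = ⌈(1/h)·arsinh((μ/α)·q(dn/μ))⌉ and N = ⌈(1/h)·arsinh((μ/β)·q(dn/μ))⌉. Then sup_{x∈ℝ} | ∑_{k=−∞}^{−M−1} F(kh)·sinc((x−kh)/h) + ∑_{k=N+1}^{∞} F(kh)·sinc((x−kh)/h) | ≤ [ 2R/( πμh·√(1 + q(dn/μ)²) ) ]·e^{−πμ·q(dn/μ)}. -/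
open Real

/-- `sinc x = sin(πx)/(πx)` for `x ≠ 0`, and `sinc 0 = 1`. -/
noncomputable def sinc (x : ℝ) : ℝ := if x = 0 then 1 else Real.sin (π * x) / (π * x)

/-- The strip domain `D_d = {ζ ∈ ℂ : |Im ζ| < d}`. -/
def strip (d : ℝ) : Set ℂ := {ζ : ℂ | |ζ.im| < d}

/-- `F ∈ L^DE_{L,R,α,β}(D_d)`. -/
structure MemLDE (L R α β d : ℝ) (F : ℂ → ℂ) : Prop where
  differentiable : DifferentiableOn ℂ F (strip d)
  bound_strip : ∀ ζ ∈ strip d, ‖F ζ‖ ≤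
      L / (‖1 + Complex.exp (-(π : ℂ) * Complex.sinh ζ)‖ ^ α *
           ‖1 + Complex.exp ((π : ℂ) * Complex.sinh ζ)‖ ^ β)
  bound_real : ∀ x : ℝ, ‖F (x : ℂ)‖ ≤
      R / ((1 + Real.exp (-(π * Real.sinh x))) ^ α *
           (1 + Real.exp (π * Real.sinh x)) ^ β)

/-- `q(x) = x / arsinh x`. -/
noncomputable def qf (x : ℝ) : ℝ := x / Real.arsinh x

/-- `p(x) = x / arsinh (x / arsinh x)`. -/
noncomputable def pf (x : ℝ) : ℝ := x / Real.arsinh (x / Real.arsinh x)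

lemma abs_sinc_le_one (y : ℝ) : |_root_.sinc y| ≤ 1 := by
  unfold _root_.sinc
  split_ifs with hy
  · simp
  · rw [abs_div]
    apply div_le_one_of_le₀ (Real.abs_sin_le_abs) (abs_nonneg _)

lemma sinh_lower (T t : ℝ) (hT : 0 ≤ T) (ht : 0 ≤ t) :
    sinh T + t * cosh T ≤ sinh (T + t) := by
  rw [Real.sinh_add]
  have h1 : 1 ≤ Real.cosh t := Real.one_le_cosh t
  have h2 : 0 ≤ Real.sinh T := Real.sinh_nonneg_iff.2 hT
  have h3 : t ≤ Real.sinh t := Real.self_le_sinh_iff.2 ht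
  have h4 : 0 < Real.cosh T := Real.cosh_pos T
  nlinarith

lemma geom_tail (A c : ℝ) (hA : 0 ≤ A) (hc : 0 < c) (f : ℕ → ℂ)
    (hf : ∀ j : ℕ, ‖f j‖ ≤ A * Real.exp (-(c * (j + 1)))) :
    ‖∑' j, f j‖ ≤ A / c := by
  set r : ℝ := Real.exp (-c) with hr
  have hr0 : 0 ≤ r := (Real.exp_pos _).le
  have hr1 : r < 1 := Real.exp_lt_one_iff.2 (by linarith)
  have hkey : ∀ j : ℕ, A * Real.exp (-(c * (j + 1))) = A * r * r ^ j := by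
    intro j
    rw [hr, ← Real.exp_nat_mul, mul_assoc, ← Real.exp_add]
    congr 1
    ring
  have hg : Summable (fun j : ℕ => A * r * r ^ j) :=
    (summable_geometric_of_lt_one hr0 hr1).mul_left _
  have hfs : Summable (fun j : ℕ => ‖f j‖) := by
    apply Summable.of_nonneg_of_le (fun j => norm_nonneg _) (fun j => ?_) hg
    calc ‖f j‖ ≤ A * Real.exp (-(c * (j + 1))) := hf j
      _ = A * r * r ^ j := hkey j
  calc ‖∑' j, f j‖ ≤ ∑' j, ‖f j‖ := norm_tsum_le_tsum_norm hfs
    _ ≤ ∑' j : ℕ, A * r * r ^ j := Summable.tsum_le_tsum (fun j => (hf j).trans_eq (hkey j)) hfs hg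
    _ = A * r * (1 - r)⁻¹ := by rw [tsum_mul_left, tsum_geometric_of_lt_one hr0 hr1]
    _ ≤ A / c := by
        rw [div_eq_mul_inv, mul_assoc]
        apply mul_le_mul_of_nonneg_left _ hA
        have h1 : c + 1 ≤ Real.exp c := Real.add_one_le_exp c
        have h2 : Real.exp c * r = 1 := by rw [hr, ← Real.exp_add]; simp
        have h3 : 0 < 1 - r := by linarith
        rw [← div_eq_mul_inv, ← one_div, div_le_div_iff₀ h3 hc]
        nlinarith [Real.exp_pos c]

lemma F_decay (R γ δ u : ℝ) (hR : 0 < R) (hγ : 0 < γ) (hδ : 0 ≤ δ) :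
    R / ((1 + Real.exp (-u)) ^ γ * (1 + Real.exp u) ^ δ) ≤ R * Real.exp (-(δ * u)) := by
  have h1 : (1:ℝ) ≤ (1 + Real.exp (-u)) ^ γ :=
    Real.one_le_rpow (by nlinarith [Real.exp_pos (-u)]) hγ.le
  have h2 : Real.exp (δ * u) ≤ (1 + Real.exp u) ^ δ := by
    calc Real.exp (δ * u) = Real.exp u ^ δ := by rw [mul_comm, Real.exp_mul]
      _ ≤ (1 + Real.exp u) ^ δ :=
        Real.rpow_le_rpow (Real.exp_pos u).le (by linarith) hδ
  have h3 : Real.exp (δ * u) ≤ (1 + Real.exp (-u)) ^ γ * (1 + Real.exp u) ^ δ := by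
    nlinarith [Real.exp_pos (δ * u), (Real.rpow_pos_of_pos (by positivity : (0:ℝ) < 1 + Real.exp u) δ)]
  have e : R * Real.exp (-(δ * u)) = R / Real.exp (δ * u) := by
    rw [Real.exp_neg]; ring
  rw [e]
  gcongr

lemma F_decay' (R γ δ u : ℝ) (hR : 0 < R) (hγ : 0 ≤ γ) (hδ : 0 < δ) :
    R / ((1 + Real.exp (-u)) ^ γ * (1 + Real.exp u) ^ δ) ≤ R * Real.exp (γ * u) := by
  have := F_decay R δ γ (-u) hR hδ hγ
  rw [neg_neg, mul_comm ((1 + Real.exp u) ^ δ)] at this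
  simpa using this

lemma final_cmp (R γ μ h T q : ℝ) (hR : 0 < R) (hγ : 0 < γ) (hμ : 0 < μ) (hμγ : μ ≤ γ)
    (hh : 0 < h) (hq : 0 ≤ q) (hT : Real.arsinh (μ / γ * q) ≤ T) :
    R * Real.exp (-(π * γ * sinh T)) / (π * γ * h * cosh T) ≤
      R * Real.exp (-(π * μ * q)) / (π * μ * h * Real.sqrt (1 + q ^ 2)) := by
  have hs : μ / γ * q ≤ sinh T := by
    rw [← Real.sinh_arsinh (μ / γ * q)]; exact Real.sinh_le_sinh.2 hT
  have hs0 : 0 ≤ μ / γ * q := by positivity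
  have h4 : μ * q ≤ γ * sinh T := by
    have h5 : γ * (μ / γ * q) = μ * q := by field_simp
    have h6 := mul_le_mul_of_nonneg_left hs hγ.le
    rw [h5] at h6
    exact h6
  have hnum : Real.exp (-(π * γ * sinh T)) ≤ Real.exp (-(π * μ * q)) := by
    apply Real.exp_le_exp.2
    nlinarith [pi_pos]
  have hden : π * μ * h * Real.sqrt (1 + q ^ 2) ≤ π * γ * h * cosh T := by
    have hc : μ * Real.sqrt (1 + q ^ 2) ≤ γ * cosh T := by
      have e1 : μ * Real.sqrt (1 + q ^ 2) = Real.sqrt (μ ^ 2 * (1 + q ^ 2)) := by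
        rw [Real.sqrt_mul (sq_nonneg μ), Real.sqrt_sq hμ.le]
      have e2 : γ * cosh T = Real.sqrt (γ ^ 2 * (1 + sinh T ^ 2)) := by
        rw [Real.sqrt_mul (sq_nonneg γ), Real.sqrt_sq hγ.le, ← Real.cosh_sq',
          Real.sqrt_sq (Real.cosh_pos T).le]
      rw [e1, e2]
      apply Real.sqrt_le_sqrt
      nlinarith [mul_nonneg hμ.le hq]
    nlinarith [mul_le_mul_of_nonneg_left hc (mul_pos Real.pi_pos hh).le]
  have hdpos : 0 < π * μ * h * Real.sqrt (1 + q ^ 2) := by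
    have : (0:ℝ) < Real.sqrt (1 + q ^ 2) := Real.sqrt_pos.2 (by positivity)
    positivity
  gcongr

def eAbove (N : ℤ) : ℕ ≃ {k : ℤ // N ≤ k} where
  toFun j := ⟨N + j, by omega⟩
  invFun k := (k.1 - N).toNat
  left_inv j := by simp
  right_inv k := by
    apply Subtype.ext
    have := k.2
    simp only []
    omega

def eBelow (M : ℤ) : ℕ ≃ {k : ℤ // k ≤ M} where
  toFun j := ⟨M - j, by omega⟩
  invFun k := (M - k.1).toNat
  left_inv j := by simp
  right_inv k := by
    apply Subtype.ext
    have := k.2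
    simp only []
    omega

lemma tail_est (R γ h T : ℝ) (hR : 0 < R) (hγ : 0 < γ) (hh : 0 < h) (hT : 0 ≤ T)
    (f : ℕ → ℂ) (hf : ∀ j : ℕ, ‖f j‖ ≤ R * Real.exp (-(π * γ * sinh (T + ((j : ℝ) + 1) * h)))) :
    ‖∑' j, f j‖ ≤ R * Real.exp (-(π * γ * sinh T)) / (π * γ * h * cosh T) := by
  have hcosh := Real.cosh_pos T
  have hc0 : 0 < π * γ * h * cosh T := by positivity
  have hA : 0 ≤ R * Real.exp (-(π * γ * sinh T)) := by positivity
  have key := geom_tail (R * Real.exp (-(π * γ * sinh T))) (π * γ * h * cosh T) hA hc0 f ?_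
  · exact key
  intro j
  have hs := sinh_lower T (((j : ℝ) + 1) * h) hT (by positivity)
  calc ‖f j‖ ≤ R * Real.exp (-(π * γ * sinh (T + ((j : ℝ) + 1) * h))) := hf j
    _ ≤ R * Real.exp (-(π * γ * (sinh T + ((j : ℝ) + 1) * h * cosh T))) := by
        apply mul_le_mul_of_nonneg_left _ hR.le
        apply Real.exp_le_exp.2
        nlinarith [mul_le_mul_of_nonneg_left hs (mul_pos Real.pi_pos hγ).le]
    _ = R * Real.exp (-(π * γ * sinh T)) * Real.exp (-(π * γ * h * cosh T * ((j : ℝ) + 1))) := by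
        conv_rhs => rw [mul_assoc, ← Real.exp_add]
        congr 1
        ring

lemma term_bound_right (F : ℂ → ℂ) (R α β : ℝ) (hR : 0 < R) (hα : 0 < α) (hβ : 0 < β)
    (hFb : ∀ x : ℝ, ‖F (x : ℂ)‖ ≤
      R / ((1 + Real.exp (-(π * Real.sinh x))) ^ α * (1 + Real.exp (π * Real.sinh x)) ^ β))
    (t y : ℝ) :
    ‖F (t : ℂ) * ((_root_.sinc y : ℝ) : ℂ)‖ ≤ R * Real.exp (-(β * (π * Real.sinh t))) := by
  rw [norm_mul, Complex.norm_real, Real.norm_eq_abs]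
  have h1 : ‖F (t : ℂ)‖ ≤ R * Real.exp (-(β * (π * Real.sinh t))) := by
    exact (hFb t).trans (F_decay R α β (π * Real.sinh t) hR hα hβ.le)
  calc ‖F (t : ℂ)‖ * |_root_.sinc y| ≤ ‖F (t : ℂ)‖ * 1 :=
        mul_le_mul_of_nonneg_left (abs_sinc_le_one y) (norm_nonneg _)
    _ = ‖F (t : ℂ)‖ := mul_one _
    _ ≤ _ := h1

lemma term_bound_left (F : ℂ → ℂ) (R α β : ℝ) (hR : 0 < R) (hα : 0 < α) (hβ : 0 < β)
    (hFb : ∀ x : ℝ, ‖F (x : ℂ)‖ ≤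
      R / ((1 + Real.exp (-(π * Real.sinh x))) ^ α * (1 + Real.exp (π * Real.sinh x)) ^ β))
    (t y : ℝ) :
    ‖F (t : ℂ) * ((_root_.sinc y : ℝ) : ℂ)‖ ≤ R * Real.exp (α * (π * Real.sinh t)) := by
  rw [norm_mul, Complex.norm_real, Real.norm_eq_abs]
  have h1 : ‖F (t : ℂ)‖ ≤ R * Real.exp (α * (π * Real.sinh t)) := by
    exact (hFb t).trans (F_decay' R α β (π * Real.sinh t) hR hα.le hβ)
  calc ‖F (t : ℂ)‖ * |_root_.sinc y| ≤ ‖F (t : ℂ)‖ * 1 :=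
        mul_le_mul_of_nonneg_left (abs_sinc_le_one y) (norm_nonneg _)
    _ = ‖F (t : ℂ)‖ := mul_one _
    _ ≤ _ := h1

theorem stmt4 (L R α β d : ℝ) (hL : 0 < L) (hR : 0 < R) (hα : 0 < α) (hβ : 0 < β)
    (hd0 : 0 < d) (hd : d < π / 2) (F : ℂ → ℂ) (hF : MemLDE L R α β d F)
    (μ : ℝ) (hμ : μ = min α β)
    (n : ℕ) (hn : 0 < n)
    (h : ℝ) (hh : 0 < h)
    (M N : ℤ)
    (hM : M = ⌈(1 / h) * Real.arsinh ((μ / α) * qf (d * n / μ))⌉)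
    (hN : N = ⌈(1 / h) * Real.arsinh ((μ / β) * qf (d * n / μ))⌉) :
    ∀ x : ℝ,
      ‖((∑' k : {k : ℤ // k ≤ -M - 1},
              F (((k : ℝ) * h : ℝ) : ℂ) * ((_root_.sinc ((x - (k : ℝ) * h) / h) : ℝ) : ℂ)) +
           (∑' k : {k : ℤ // N + 1 ≤ k},
              F (((k : ℝ) * h : ℝ) : ℂ) * ((_root_.sinc ((x - (k : ℝ) * h) / h) : ℝ) : ℂ)))‖ ≤
      (2 * R / (π * μ * h * Real.sqrt (1 + qf (d * n / μ) ^ 2))) *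
        Real.exp (-(π * μ * qf (d * n / μ))) := by
  intro x
  have hμ0 : 0 < μ := by rw [hμ]; exact lt_min hα hβ
  have hμα : μ ≤ α := by rw [hμ]; exact min_le_left _ _
  have hμβ : μ ≤ β := by rw [hμ]; exact min_le_right _ _
  set q : ℝ := qf (d * n / μ) with hqdef
  have hn' : (0:ℝ) < n := by exact_mod_cast hn
  have hdn : 0 < d * n / μ := by positivity
  have hq : 0 ≤ q := by
    rw [hqdef]
    unfold qf
    exact div_nonneg hdn.le (Real.arsinh_nonneg_iff.2 hdn.le)
  set B : ℝ := R * Real.exp (-(π * μ * q)) / (π * μ * h * Real.sqrt (1 + q ^ 2)) with hB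
  -- the two index maps
  have hNh : Real.arsinh (μ / β * q) ≤ (N : ℝ) * h := by
    have h1 : (1 / h) * Real.arsinh (μ / β * q) ≤ (N : ℝ) := by
      rw [hN]; exact_mod_cast Int.le_ceil _
    calc Real.arsinh (μ / β * q) = (1 / h) * Real.arsinh (μ / β * q) * h := by
          field_simp
      _ ≤ (N : ℝ) * h := mul_le_mul_of_nonneg_right h1 hh.le
  have hNh0 : 0 ≤ (N : ℝ) * h :=
    le_trans (Real.arsinh_nonneg_iff.2 (by positivity)) hNh
  have hMh : Real.arsinh (μ / α * q) ≤ (M : ℝ) * h := by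
    have h1 : (1 / h) * Real.arsinh (μ / α * q) ≤ (M : ℝ) := by
      rw [hM]; exact_mod_cast Int.le_ceil _
    calc Real.arsinh (μ / α * q) = (1 / h) * Real.arsinh (μ / α * q) * h := by
          field_simp
      _ ≤ (M : ℝ) * h := mul_le_mul_of_nonneg_right h1 hh.le
  have hMh0 : 0 ≤ (M : ℝ) * h :=
    le_trans (Real.arsinh_nonneg_iff.2 (by positivity)) hMh
  -- right tail
  have hright : ‖(∑' k : {k : ℤ // N + 1 ≤ k},
      F (((k : ℝ) * h : ℝ) : ℂ) * ((_root_.sinc ((x - (k : ℝ) * h) / h) : ℝ) : ℂ))‖ ≤ B := by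
    rw [← Equiv.tsum_eq (eAbove (N + 1))
      (fun k : {k : ℤ // N + 1 ≤ k} =>
        F (((k : ℝ) * h : ℝ) : ℂ) * ((_root_.sinc ((x - (k : ℝ) * h) / h) : ℝ) : ℂ))]
    have hstep := tail_est R β h ((N : ℝ) * h) hR hβ hh hNh0
      (fun j => F ((((eAbove (N + 1) j : ℤ) : ℝ) * h : ℝ) : ℂ) *
        ((_root_.sinc ((x - ((eAbove (N + 1) j : ℤ) : ℝ) * h) / h) : ℝ) : ℂ)) ?_
    · refine hstep.trans ?_
      rw [hB]
      exact final_cmp R β μ h ((N : ℝ) * h) q hR hβ hμ0 hμβ hh hq hNh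
    intro j
    have harg : ((eAbove (N + 1) j : ℤ) : ℝ) * h = (N : ℝ) * h + ((j : ℝ) + 1) * h := by
      have hv : ((eAbove (N + 1) j : ℤ)) = N + 1 + (j : ℤ) := rfl
      rw [hv]; push_cast; ring
    refine (term_bound_right F R α β hR hα hβ hF.bound_real _ _).trans (le_of_eq ?_)
    rw [harg]
    congr 1
    ring
  -- left tail
  have hleft : ‖(∑' k : {k : ℤ // k ≤ -M - 1},
      F (((k : ℝ) * h : ℝ) : ℂ) * ((_root_.sinc ((x - (k : ℝ) * h) / h) : ℝ) : ℂ))‖ ≤ B := by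
    rw [← Equiv.tsum_eq (eBelow (-M - 1))
      (fun k : {k : ℤ // k ≤ -M - 1} =>
        F (((k : ℝ) * h : ℝ) : ℂ) * ((_root_.sinc ((x - (k : ℝ) * h) / h) : ℝ) : ℂ))]
    have hstep := tail_est R α h ((M : ℝ) * h) hR hα hh hMh0
      (fun j => F ((((eBelow (-M - 1) j : ℤ) : ℝ) * h : ℝ) : ℂ) *
        ((_root_.sinc ((x - ((eBelow (-M - 1) j : ℤ) : ℝ) * h) / h) : ℝ) : ℂ)) ?_
    · refine hstep.trans ?_
      rw [hB]
      exact final_cmp R α μ h ((M : ℝ) * h) q hR hα hμ0 hμα hh hq hMh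
    intro j
    have harg : ((eBelow (-M - 1) j : ℤ) : ℝ) * h = -((M : ℝ) * h + ((j : ℝ) + 1) * h) := by
      have hv : ((eBelow (-M - 1) j : ℤ)) = -M - 1 - (j : ℤ) := rfl
      rw [hv]; push_cast; ring
    refine (term_bound_left F R α β hR hα hβ hF.bound_real _ _).trans (le_of_eq ?_)
    rw [harg, Real.sinh_neg]
    congr 1
    ring
  -- combine
  refine le_trans (norm_add_le _ _) (le_trans (add_le_add hleft hright) (le_of_eq ?_))
  rw [hB]; ring
end

section
/- The functions p(x) = x/arsinh(x/arsinh x) and r(x) = p(x) − q(x), where q(x) = x/arsinh x, are monotonically increasing for x > 0; that is, for all real x, y with 0 < x ≤ y one has p(x) ≤ p(y) and p(x) − q(x) ≤ p(y) − q(y). -/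
open Real


lemma sqS_pos (x : ℝ) : 0 < Real.sqrt (1 + x ^ 2) := Real.sqrt_pos.2 (by positivity)

lemma hasDerivAt_sqS (t : ℝ) :
    HasDerivAt (fun u : ℝ => Real.sqrt (1 + u ^ 2)) (t / Real.sqrt (1 + t ^ 2)) t := by
  have hne : (1 + t ^ 2) ≠ 0 := by positivity
  have hh : HasDerivAt (fun u : ℝ => 1 + u ^ 2) (2 * t) t := by
    simpa using (hasDerivAt_pow 2 t).const_add 1
  have := (Real.hasDerivAt_sqrt hne).comp t hh
  refine this.congr_deriv ?_
  field_simp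

lemma L1 {x : ℝ} (hx : 0 ≤ x) : x ≤ Real.arsinh x * Real.sqrt (1 + x ^ 2) := by
  have hder : ∀ t : ℝ, HasDerivAt (fun u => Real.arsinh u * Real.sqrt (1 + u ^ 2) - u)
      (Real.arsinh t * t / Real.sqrt (1 + t ^ 2)) t := by
    intro t
    have h1 := Real.hasDerivAt_arsinh t
    have h2 := hasDerivAt_sqS t
    have h := (h1.mul h2).sub (hasDerivAt_id t)
    refine h.congr_deriv ?_
    have hS : Real.sqrt (1 + t ^ 2) ≠ 0 := (sqS_pos t).ne'
    field_simp
    ring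
  have key : MonotoneOn (fun u => Real.arsinh u * Real.sqrt (1 + u ^ 2) - u) (Set.Ici 0) := by
    apply monotoneOn_of_deriv_nonneg (convex_Ici 0)
    · exact fun t _ => ((hder t).differentiableAt.continuousAt).continuousWithinAt
    · exact fun t _ => (hder t).differentiableAt.differentiableWithinAt
    · intro t ht
      rw [interior_Ici] at ht
      rw [(hder t).deriv]
      have ht0 : (0:ℝ) < t := ht
      have : 0 ≤ Real.arsinh t := Real.arsinh_nonneg_iff.2 ht0.le
      positivity
  have h0 := key (Set.self_mem_Ici) (Set.mem_Ici.2 hx) hx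
  simp [Real.arsinh_zero] at h0
  linarith

lemma L2 {x : ℝ} (hx : 0 ≤ x) :
    Real.arsinh x ≤ (Real.arsinh x) ^ 3 / 3 + x / Real.sqrt (1 + x ^ 2) := by
  have hder : ∀ t : ℝ, HasDerivAt
      (fun u => (Real.arsinh u) ^ 3 / 3 + u / Real.sqrt (1 + u ^ 2) - Real.arsinh u)
      (((Real.arsinh t) ^ 2 * (1 + t ^ 2) - t ^ 2) / (Real.sqrt (1 + t ^ 2)) ^ 3) t := by
    intro t
    have h1 := Real.hasDerivAt_arsinh t
    have h2 := hasDerivAt_sqS t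
    have hS : Real.sqrt (1 + t ^ 2) ≠ 0 := (sqS_pos t).ne'
    have h3 : HasDerivAt (fun u : ℝ => u / Real.sqrt (1 + u ^ 2))
        ((1 * Real.sqrt (1 + t ^ 2) - t * (t / Real.sqrt (1 + t ^ 2))) / (Real.sqrt (1 + t ^ 2)) ^ 2) t :=
      (hasDerivAt_id t).div h2 hS
    have h := (((h1.pow 3).div_const 3).add h3).sub h1
    refine h.congr_deriv ?_
    have hSpos := sqS_pos t
    set S := Real.sqrt (1 + t ^ 2) with hSdef
    have hsq : S ^ 2 = 1 + t ^ 2 := Real.sq_sqrt (by positivity)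
    have hS : S ≠ 0 := hSpos.ne'
    rw [← hsq]
    field_simp
    ring
  have key : MonotoneOn
      (fun u => (Real.arsinh u) ^ 3 / 3 + u / Real.sqrt (1 + u ^ 2) - Real.arsinh u) (Set.Ici 0) := by
    apply monotoneOn_of_deriv_nonneg (convex_Ici 0)
    · exact fun t _ => ((hder t).differentiableAt.continuousAt).continuousWithinAt
    · exact fun t _ => (hder t).differentiableAt.differentiableWithinAt
    · intro t ht
      rw [interior_Ici] at ht
      rw [(hder t).deriv]
      have ht0 : (0:ℝ) < t := ht
      have hA : 0 ≤ Real.arsinh t := Real.arsinh_nonneg_iff.2 ht0.le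
      have hL1 := L1 ht0.le
      have hsq : Real.sqrt (1 + t ^ 2) ^ 2 = 1 + t ^ 2 := Real.sq_sqrt (by positivity)
      have hnum : 0 ≤ (Real.arsinh t) ^ 2 * (1 + t ^ 2) - t ^ 2 := by
        nlinarith [sqS_pos t]
      positivity
  have h0 := key (Set.self_mem_Ici) (Set.mem_Ici.2 hx) hx
  simp [Real.arsinh_zero] at h0
  linarith

lemma L3 : AntitoneOn (fun t => Real.arsinh t / t) (Set.Ioi 0) := by
  apply antitoneOn_of_deriv_nonpos (convex_Ioi 0)
  · intro t ht
    have ht0 : (0:ℝ) < t := ht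
    exact (((Real.differentiable_arsinh t).div (differentiable_id t) ht0.ne')).continuousAt.continuousWithinAt
  · intro t ht
    rw [interior_Ioi] at ht
    have ht0 : (0:ℝ) < t := ht
    exact ((Real.differentiable_arsinh t).div (differentiable_id t) ht0.ne').differentiableWithinAt
  · intro t ht
    rw [interior_Ioi] at ht
    have ht0 : (0:ℝ) < t := ht
    have hd : HasDerivAt (fun u => Real.arsinh u / u)
        (((Real.sqrt (1 + t ^ 2))⁻¹ * t - Real.arsinh t * 1) / t ^ 2) t :=
      (Real.hasDerivAt_arsinh t).div (hasDerivAt_id t) ht0.ne'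
    rw [hd.deriv]
    apply div_nonpos_of_nonpos_of_nonneg _ (sq_nonneg t)
    have hS := sqS_pos t
    have hL1 := L1 ht0.le
    rw [sub_nonpos, inv_mul_eq_div, div_le_iff₀ hS]
    linarith

lemma polyB {a b s : ℝ} (ha : 1 ≤ a) (hb1 : 1 ≤ b) (hba : b ≤ a)
    (hs : 1/2 ≤ s) (hs1 : s ≤ 1) : (a - s) * (b ^ 2 + a * s) ≤ a ^ 2 * b := by
  have hG1 : (a - s) * (1 + a * s) ≤ a ^ 2 := by
    rcases le_total a (1 + s) with h | h
    · nlinarith [mul_nonneg (mul_nonneg (by linarith : (0:ℝ) ≤ a) (by linarith : (0:ℝ) ≤ 1 - s)) (by linarith : (0:ℝ) ≤ a - 1),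
        mul_nonneg (mul_nonneg (by linarith : (0:ℝ) ≤ 1 + s - a) (by linarith : (0:ℝ) ≤ 1 - s)) (by linarith : (0:ℝ) ≤ s),
        pow_nonneg (by linarith : (0:ℝ) ≤ s) 3]
    · nlinarith [mul_nonneg (sub_nonneg.2 hs1) (sub_nonneg.2 h)]
  have hGa : (a - s) * (a ^ 2 + a * s) ≤ a ^ 2 * a := by nlinarith [sq_nonneg s]
  have hkey : (a - 1) * (a ^ 2 * b - (a - s) * (b ^ 2 + a * s)) =
      (a - b) * (a ^ 2 - (a - s) * (1 + a * s)) + (b - 1) * (a ^ 2 * a - (a - s) * (a ^ 2 + a * s))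
      + (a - 1) * (a - s) * ((b - 1) * (a - b)) := by ring
  rcases eq_or_lt_of_le ha with h1 | h1
  · have hb : b = 1 := le_antisymm (h1 ▸ hba) hb1
    rw [← h1, hb]; nlinarith
  · have hs' : s ≤ a := le_trans hs1 ha
    nlinarith [mul_nonneg (mul_nonneg (sub_nonneg.2 hb1) (sub_nonneg.2 hba)) (sub_nonneg.2 hs'),
      mul_nonneg (sub_nonneg.2 hba) (sub_nonneg.2 hG1),
      mul_nonneg (sub_nonneg.2 hb1) (sub_nonneg.2 hGa)]

lemma core {x a b S T : ℝ} (hx : 0 < x) (ha : 0 < a) (hb : 0 < b)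
    (hS0 : 0 < S) (hT0 : 0 < T)
    (hS : S ^ 2 = 1 + x ^ 2) (hT : a ^ 2 * T ^ 2 = a ^ 2 + x ^ 2)
    (h1 : x ≤ a * S) (h2 : a ≤ a ^ 3 / 3 + x / S) (h3 : x ≤ a * (b * T))
    (hcase : (a ≤ 1 ∧ b ≤ 1) ∨ (1 ≤ a ∧ 1 ≤ b ∧ b ≤ a ∧ S ≤ 2 * x)) :
    (a * S - x) * (b ^ 2 * T + x) ≤ a ^ 2 * b * S * T := by
  rcases hcase with ⟨ha1, hb1⟩ | ⟨ha1, hb1, hba, hsx⟩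
  · -- small case
    have e1 : a * S - x ≤ a ^ 3 / 3 * S := by
      have := (mul_le_mul_of_nonneg_right h2 hS0.le)
      rw [add_mul, div_mul_eq_mul_div, mul_div_assoc] at this
      rw [div_mul_cancel₀] at this
      · linarith
      · exact hS0.ne'
    have e2 : b ^ 2 * T + x ≤ (1 + a) * (b * T) := by nlinarith
    have e3 : 0 ≤ b ^ 2 * T + x := by positivity
    have e7 : (0:ℝ) ≤ a ^ 3 / 3 * S := mul_nonneg (by positivity) hS0.le
    have e8 : (a * S - x) * (b ^ 2 * T + x) ≤ (a ^ 3 / 3 * S) * ((1 + a) * (b * T)) :=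
      mul_le_mul e1 e2 e3 e7
    have e9 : (a ^ 3 / 3 * S) * ((1 + a) * (b * T)) ≤ a ^ 2 * b * S * T := by
      nlinarith [mul_pos (mul_pos hb hT0) hS0, mul_pos (mul_pos (mul_pos hb hT0) hS0) ha,
        mul_nonneg (mul_nonneg (mul_nonneg (mul_nonneg (mul_nonneg hb.le hT0.le) hS0.le) ha.le) ha.le) (by linarith : (0:ℝ) ≤ 1 - a)]
    linarith
  · -- large case
    have hxS : x ≤ S := by nlinarith
    have hSaT : S ≤ a * T := by
      have h : S ^ 2 ≤ (a * T) ^ 2 := by nlinarith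
      calc S = Real.sqrt (S ^ 2) := (Real.sqrt_sq hS0.le).symm
        _ ≤ Real.sqrt ((a * T) ^ 2) := Real.sqrt_le_sqrt h
        _ = a * T := Real.sqrt_sq (by positivity)
    -- reduce to polyB with s = x / S
    set s : ℝ := x / S with hsdef
    have hxs : x = s * S := by rw [hsdef, div_mul_cancel₀ _ hS0.ne']
    have hs : 1/2 ≤ s := by rw [hsdef, le_div_iff₀ hS0]; linarith
    have hs1 : s ≤ 1 := by rw [hsdef, div_le_one hS0]; exact hxS
    have hpoly := polyB ha1 hb1 hba hs hs1
    -- target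
    have key : (a * S - x) * (b ^ 2 * S + a * x) ≤ a ^ 2 * b * S ^ 2 := by
      rw [hxs]
      calc (a * S - s * S) * (b ^ 2 * S + a * (s * S)) = ((a - s) * (b ^ 2 + a * s)) * S ^ 2 := by ring
        _ ≤ (a ^ 2 * b) * S ^ 2 := by
            apply mul_le_mul_of_nonneg_right hpoly (sq_nonneg S)
        _ = a ^ 2 * b * S ^ 2 := by ring
    -- combine: (aS - x)(b²T + x)·S ≤ (aS - x)·T·(b²S + ax) ≤ a²bS²T
    have haSx : 0 ≤ a * S - x := by linarith
    have e4 : (b ^ 2 * T + x) * S ≤ T * (b ^ 2 * S + a * x) := by nlinarith [mul_le_mul_of_nonneg_left hSaT hx.le]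
    have e5 : (a * S - x) * ((b ^ 2 * T + x) * S) ≤ (a * S - x) * (T * (b ^ 2 * S + a * x)) :=
      mul_le_mul_of_nonneg_left e4 haSx
    have e6 : (a * S - x) * (T * (b ^ 2 * S + a * x)) ≤ T * (a ^ 2 * b * S ^ 2) := by
      calc (a * S - x) * (T * (b ^ 2 * S + a * x)) = T * ((a * S - x) * (b ^ 2 * S + a * x)) := by ring
        _ ≤ T * (a ^ 2 * b * S ^ 2) := mul_le_mul_of_nonneg_left key hT0.le
    have := le_trans e5 e6
    have hfin : (a * S - x) * (b ^ 2 * T + x) * S ≤ a ^ 2 * b * S * T * S := by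
      calc (a * S - x) * (b ^ 2 * T + x) * S = (a * S - x) * ((b ^ 2 * T + x) * S) := by ring
        _ ≤ T * (a ^ 2 * b * S ^ 2) := this
        _ = a ^ 2 * b * S * T * S := by ring
    exact le_of_mul_le_mul_right hfin hS0
lemma sinh_one_ge : (1:ℝ) ≤ Real.sinh 1 := by
  rw [Real.sinh_eq]
  have h1 : (2.7182818283 : ℝ) < Real.exp 1 := Real.exp_one_gt_d9
  have h2 : Real.exp (-1) < 0.368 := by
    rw [Real.exp_neg]
    rw [inv_lt_comm₀ (Real.exp_pos 1) (by norm_num)]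
    linarith
  norm_num
  linarith

lemma case_facts {x : ℝ} (hx : 0 < x) :
    (Real.arsinh x ≤ 1 ∧ Real.arsinh (qf x) ≤ 1) ∨
    (1 ≤ Real.arsinh x ∧ 1 ≤ Real.arsinh (qf x) ∧ Real.arsinh (qf x) ≤ Real.arsinh x ∧
      Real.sqrt (1 + x ^ 2) ≤ 2 * x) := by
  have hs1 : (1:ℝ) ≤ Real.sinh 1 := sinh_one_ge
  have hs0 : (0:ℝ) < Real.sinh 1 := by linarith
  have ha : 0 < Real.arsinh x := Real.arsinh_pos_iff.2 hx
  rcases le_total x (Real.sinh 1) with hc | hc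
  · left
    have ha1 : Real.arsinh x ≤ 1 := by
      have := Real.arsinh_le_arsinh.2 hc
      rwa [Real.arsinh_sinh] at this
    constructor
    · exact ha1
    · -- qf x ≤ sinh 1
      have hL3 := L3 (Set.mem_Ioi.2 hx) (Set.mem_Ioi.2 hs0) hc
      simp only [Real.arsinh_sinh] at hL3
      -- 1 / sinh 1 ≤ arsinh x / x
      have hq : qf x ≤ Real.sinh 1 := by
        rw [qf, div_le_iff₀ ha]
        rw [div_le_div_iff₀ hs0 hx] at hL3
        linarith
      have := Real.arsinh_le_arsinh.2 hq
      rwa [Real.arsinh_sinh] at this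
  · right
    have ha1 : 1 ≤ Real.arsinh x := by
      have := Real.arsinh_le_arsinh.2 hc
      rwa [Real.arsinh_sinh] at this
    have hq1 : Real.sinh 1 ≤ qf x := by
      have hL3 := L3 (Set.mem_Ioi.2 hs0) (Set.mem_Ioi.2 (lt_of_lt_of_le hs0 hc)) hc
      simp only [Real.arsinh_sinh] at hL3
      rw [qf, le_div_iff₀ ha]
      rw [div_le_div_iff₀ (lt_of_lt_of_le hs0 hc) hs0] at hL3
      linarith
    refine ⟨ha1, ?_, ?_, ?_⟩
    · have := Real.arsinh_le_arsinh.2 hq1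
      rwa [Real.arsinh_sinh] at this
    · exact Real.arsinh_le_arsinh.2 (div_le_self hx.le ha1)
    · have hx1 : (1:ℝ) ≤ x := le_trans hs1 hc
      have h4 : 1 + x ^ 2 ≤ (2*x) ^ 2 := by nlinarith
      calc Real.sqrt (1 + x ^ 2) ≤ Real.sqrt ((2*x) ^ 2) := Real.sqrt_le_sqrt h4
        _ = 2 * x := Real.sqrt_sq (by linarith)

section main
variable {x : ℝ}

lemma derivs (hx : 0 < x) :
    ∃ P Q : ℝ, HasDerivAt pf P x ∧ HasDerivAt qf Q x ∧ 0 ≤ P ∧ Q ≤ P := by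
  have ha : 0 < Real.arsinh x := Real.arsinh_pos_iff.2 hx
  set a := Real.arsinh x with hadef
  set S := Real.sqrt (1 + x ^ 2) with hSdef
  have hS0 : 0 < S := sqS_pos x
  have hq0 : 0 < qf x := div_pos hx ha
  have hb : 0 < Real.arsinh (qf x) := Real.arsinh_pos_iff.2 hq0
  set b := Real.arsinh (qf x) with hbdef
  set T := Real.sqrt (1 + qf x ^ 2) with hTdef
  have hT0 : 0 < T := sqS_pos (qf x)
  -- derivative of qf
  have hqd : HasDerivAt qf ((1 * a - x * S⁻¹) / a ^ 2) x := by
    have := (hasDerivAt_id x).div (Real.hasDerivAt_arsinh x) ha.ne'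
    exact this
  -- derivative of arsinh ∘ qf
  have hBd : HasDerivAt (fun t => Real.arsinh (qf t))
      (T⁻¹ * ((1 * a - x * S⁻¹) / a ^ 2)) x := by
    have := hqd.arsinh
    simpa [smul_eq_mul] using this
  -- derivative of pf
  have hpd : HasDerivAt pf
      ((1 * b - x * (T⁻¹ * ((1 * a - x * S⁻¹) / a ^ 2))) / b ^ 2) x := by
    have h := (hasDerivAt_id x).div hBd hb.ne'
    exact h.congr_deriv rfl
  refine ⟨_, _, hpd, hqd, ?_, ?_⟩
  · -- 0 ≤ P
    apply div_nonneg _ (sq_nonneg b)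
    have h3 : x ≤ a * (b * T) := by
      calc x = a * qf x := by rw [qf]; field_simp; exact (div_self ha.ne').symm
        _ ≤ a * (b * T) := by
            apply mul_le_mul_of_nonneg_left _ ha.le
            exact L1 hq0.le
    have hfrac : x * (T⁻¹ * ((1 * a - x * S⁻¹) / a ^ 2)) ≤ b := by
      rw [inv_mul_eq_div, div_div, mul_div_assoc']
      rw [div_le_iff₀ (by positivity)]
      have hx2S : 0 ≤ x ^ 2 * S⁻¹ := by positivity
      nlinarith [mul_le_mul_of_nonneg_left h3 ha.le]
    linarith
  · -- Q ≤ P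
    rw [div_le_div_iff₀ (by positivity) (by positivity)]
    have hSsq : S ^ 2 = 1 + x ^ 2 := Real.sq_sqrt (by positivity)
    have hTsq : a ^ 2 * T ^ 2 = a ^ 2 + x ^ 2 := by
      have h : T ^ 2 = 1 + (qf x) ^ 2 := Real.sq_sqrt (by positivity)
      rw [h, qf]
      field_simp
      rw [hadef]
      have ha' : Real.arsinh x ≠ 0 := ha.ne'
      field_simp
    have h1 : x ≤ a * S := by
      have := L1 hx.le; linarith [this]
    have h2 : a ≤ a ^ 3 / 3 + x / S := L2 hx.le
    have h3 : x ≤ a * (b * T) := by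
      calc x = a * qf x := by rw [qf]; field_simp; exact (div_self ha.ne').symm
        _ ≤ a * (b * T) := mul_le_mul_of_nonneg_left (L1 hq0.le) ha.le
    have main := core hx ha hb hS0 hT0 hSsq hTsq h1 h2 h3 (case_facts hx)
    have expand : (1 * b - x * (T⁻¹ * ((1 * a - x * S⁻¹) / a ^ 2))) * a ^ 2 * (S * T)
        - (1 * a - x * S⁻¹) * b ^ 2 * (S * T)
        = a ^ 2 * b * S * T - (a * S - x) * (b ^ 2 * T + x) := by
      field_simp
      ring
    have h9 : 0 ≤ (1 * b - x * (T⁻¹ * ((1 * a - x * S⁻¹) / a ^ 2))) * a ^ 2 * (S * T)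
        - (1 * a - x * S⁻¹) * b ^ 2 * (S * T) := by rw [expand]; linarith
    have h10 : (1 * a - x * S⁻¹) * b ^ 2 * (S * T)
        ≤ (1 * b - x * (T⁻¹ * ((1 * a - x * S⁻¹) / a ^ 2))) * a ^ 2 * (S * T) := by linarith
    exact le_of_mul_le_mul_right h10 (mul_pos hS0 hT0)

lemma pf_mono : MonotoneOn pf (Set.Ioi 0) := by
  apply monotoneOn_of_deriv_nonneg (convex_Ioi 0)
  · intro t ht
    obtain ⟨P, Q, hp, hq, _, _⟩ := derivs ht
    exact hp.differentiableAt.continuousAt.continuousWithinAt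
  · intro t ht
    rw [interior_Ioi] at ht
    obtain ⟨P, Q, hp, hq, _, _⟩ := derivs ht
    exact hp.differentiableAt.differentiableWithinAt
  · intro t ht
    rw [interior_Ioi] at ht
    obtain ⟨P, Q, hp, hq, hP, _⟩ := derivs ht
    rw [hp.deriv]; exact hP

lemma rf_mono : MonotoneOn (fun t => pf t - qf t) (Set.Ioi 0) := by
  apply monotoneOn_of_deriv_nonneg (convex_Ioi 0)
  · intro t ht
    obtain ⟨P, Q, hp, hq, _, _⟩ := derivs ht
    exact (hp.sub hq).differentiableAt.continuousAt.continuousWithinAt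
  · intro t ht
    rw [interior_Ioi] at ht
    obtain ⟨P, Q, hp, hq, _, _⟩ := derivs ht
    exact (hp.sub hq).differentiableAt.differentiableWithinAt
  · intro t ht
    rw [interior_Ioi] at ht
    obtain ⟨P, Q, hp, hq, _, hQP⟩ := derivs ht
    rw [show deriv (fun t => pf t - qf t) t = P - Q from (hp.sub hq).deriv]; linarith

end main

theorem stmt5 :
    ∀ x y : ℝ, 0 < x → x ≤ y →
      pf x ≤ pf y ∧ pf x - qf x ≤ pf y - qf y := by
  intro x y hx hxy
  have hy : 0 < y := lt_of_lt_of_le hx hxy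
  exact ⟨pf_mono (Set.mem_Ioi.2 hx) (Set.mem_Ioi.2 hy) hxy,
    rf_mono (Set.mem_Ioi.2 hx) (Set.mem_Ioi.2 hy) hxy⟩
end

section
/- For all real t ≥ 0, sinh t ≥ t·sinh(2t/π). -/
open Real

lemma nn_aux {f f' : ℝ → ℝ} (h : ∀ x, HasDerivAt f (f' x) x) (h0 : f 0 = 0)
    (h' : ∀ x, 0 ≤ x → 0 ≤ f' x) {x : ℝ} (hx : 0 ≤ x) : 0 ≤ f x := by
  have hmono : MonotoneOn f (Set.Ici (0:ℝ)) := by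
    apply monotoneOn_of_deriv_nonneg (convex_Ici 0)
      (fun y _ => (h y).continuousAt.continuousWithinAt)
      (fun y _ => (h y).differentiableAt.differentiableWithinAt)
    intro y hy
    rw [(h y).deriv]
    exact h' y (le_of_lt (by simpa using hy))
  calc (0:ℝ) = f 0 := h0.symm
    _ ≤ f x := hmono (Set.self_mem_Ici) hx hx
lemma l1 {x : ℝ} (hx : 0 ≤ x) : x ≤ Real.sinh x := by
  have h := nn_aux (f := fun y => Real.sinh y - (y))
    (f' := fun y => Real.cosh y - (1))
    (fun y => by
      have h1 := (Real.hasDerivAt_sinh y).sub (hasDerivAt_id y)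
      convert h1 using 1
      all_goals (try funext z)
      all_goals (try simp only [id_eq, Pi.sub_apply, Pi.add_apply, Pi.mul_apply])
      all_goals (try push_cast)
      all_goals first | rfl | ring)
    (by norm_num) ((fun y hy => by show (0:ℝ) ≤ Real.cosh y - (1); linarith [Real.one_le_cosh y])) hx
  exact sub_nonneg.mp h

lemma l2 {x : ℝ} (hx : 0 ≤ x) : 1 + x^2/2 ≤ Real.cosh x := by
  have h := nn_aux (f := fun y => Real.cosh y - (1 + y^2/2))
    (f' := fun y => Real.sinh y - (y))
    (fun y => by
      have h1 := (Real.hasDerivAt_cosh y).sub ((hasDerivAt_const y (1:ℝ)).add ((hasDerivAt_pow 2 y).div_const 2))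
      convert h1 using 1
      all_goals (try funext z)
      all_goals (try simp only [id_eq, Pi.sub_apply, Pi.add_apply, Pi.mul_apply])
      all_goals (try push_cast)
      all_goals first | rfl | ring)
    (by norm_num) ((fun y hy => by show (0:ℝ) ≤ Real.sinh y - (y); linarith [l1 hy])) hx
  exact sub_nonneg.mp h

lemma l3 {x : ℝ} (hx : 0 ≤ x) : x + x^3/6 ≤ Real.sinh x := by
  have h := nn_aux (f := fun y => Real.sinh y - (y + y^3/6))
    (f' := fun y => Real.cosh y - (1 + y^2/2))
    (fun y => by
      have h1 := (Real.hasDerivAt_sinh y).sub ((hasDerivAt_id y).add ((hasDerivAt_pow 3 y).div_const 6))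
      convert h1 using 1
      all_goals (try funext z)
      all_goals (try simp only [id_eq, Pi.sub_apply, Pi.add_apply, Pi.mul_apply])
      all_goals (try push_cast)
      all_goals first | rfl | ring)
    (by norm_num) ((fun y hy => by show (0:ℝ) ≤ Real.cosh y - (1 + y^2/2); linarith [l2 hy])) hx
  exact sub_nonneg.mp h

lemma l4 {x : ℝ} (hx : 0 ≤ x) : 1 + x^2/2 + x^4/24 ≤ Real.cosh x := by
  have h := nn_aux (f := fun y => Real.cosh y - (1 + y^2/2 + y^4/24))
    (f' := fun y => Real.sinh y - (y + y^3/6))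
    (fun y => by
      have h1 := (Real.hasDerivAt_cosh y).sub (((hasDerivAt_const y (1:ℝ)).add ((hasDerivAt_pow 2 y).div_const 2)).add ((hasDerivAt_pow 4 y).div_const 24))
      convert h1 using 1
      all_goals (try funext z)
      all_goals (try simp only [id_eq, Pi.sub_apply, Pi.add_apply, Pi.mul_apply])
      all_goals (try push_cast)
      all_goals first | rfl | ring)
    (by norm_num) ((fun y hy => by show (0:ℝ) ≤ Real.sinh y - (y + y^3/6); linarith [l3 hy])) hx
  exact sub_nonneg.mp h

lemma l5 {x : ℝ} (hx : 0 ≤ x) : x + x^3/6 + x^5/120 ≤ Real.sinh x := by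
  have h := nn_aux (f := fun y => Real.sinh y - (y + y^3/6 + y^5/120))
    (f' := fun y => Real.cosh y - (1 + y^2/2 + y^4/24))
    (fun y => by
      have h1 := (Real.hasDerivAt_sinh y).sub (((hasDerivAt_id y).add ((hasDerivAt_pow 3 y).div_const 6)).add ((hasDerivAt_pow 5 y).div_const 120))
      convert h1 using 1
      all_goals (try funext z)
      all_goals (try simp only [id_eq, Pi.sub_apply, Pi.add_apply, Pi.mul_apply])
      all_goals (try push_cast)
      all_goals first | rfl | ring)
    (by norm_num) ((fun y hy => by show (0:ℝ) ≤ Real.cosh y - (1 + y^2/2 + y^4/24); linarith [l4 hy])) hx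
  exact sub_nonneg.mp h

lemma l6 {x : ℝ} (hx : 0 ≤ x) : 1 + x^2/2 + x^4/24 + x^6/720 ≤ Real.cosh x := by
  have h := nn_aux (f := fun y => Real.cosh y - (1 + y^2/2 + y^4/24 + y^6/720))
    (f' := fun y => Real.sinh y - (y + y^3/6 + y^5/120))
    (fun y => by
      have h1 := (Real.hasDerivAt_cosh y).sub ((((hasDerivAt_const y (1:ℝ)).add ((hasDerivAt_pow 2 y).div_const 2)).add ((hasDerivAt_pow 4 y).div_const 24)).add ((hasDerivAt_pow 6 y).div_const 720))
      convert h1 using 1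
      all_goals (try funext z)
      all_goals (try simp only [id_eq, Pi.sub_apply, Pi.add_apply, Pi.mul_apply])
      all_goals (try push_cast)
      all_goals first | rfl | ring)
    (by norm_num) ((fun y hy => by show (0:ℝ) ≤ Real.sinh y - (y + y^3/6 + y^5/120); linarith [l5 hy])) hx
  exact sub_nonneg.mp h

lemma l7 {x : ℝ} (hx : 0 ≤ x) : x + x^3/6 + x^5/120 + x^7/5040 ≤ Real.sinh x := by
  have h := nn_aux (f := fun y => Real.sinh y - (y + y^3/6 + y^5/120 + y^7/5040))
    (f' := fun y => Real.cosh y - (1 + y^2/2 + y^4/24 + y^6/720))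
    (fun y => by
      have h1 := (Real.hasDerivAt_sinh y).sub ((((hasDerivAt_id y).add ((hasDerivAt_pow 3 y).div_const 6)).add ((hasDerivAt_pow 5 y).div_const 120)).add ((hasDerivAt_pow 7 y).div_const 5040))
      convert h1 using 1
      all_goals (try funext z)
      all_goals (try simp only [id_eq, Pi.sub_apply, Pi.add_apply, Pi.mul_apply])
      all_goals (try push_cast)
      all_goals first | rfl | ring)
    (by norm_num) ((fun y hy => by show (0:ℝ) ≤ Real.cosh y - (1 + y^2/2 + y^4/24 + y^6/720); linarith [l6 hy])) hx
  exact sub_nonneg.mp h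

lemma l8 {x : ℝ} (hx : 0 ≤ x) : 1 + x^2/2 + x^4/24 + x^6/720 + x^8/40320 ≤ Real.cosh x := by
  have h := nn_aux (f := fun y => Real.cosh y - (1 + y^2/2 + y^4/24 + y^6/720 + y^8/40320))
    (f' := fun y => Real.sinh y - (y + y^3/6 + y^5/120 + y^7/5040))
    (fun y => by
      have h1 := (Real.hasDerivAt_cosh y).sub (((((hasDerivAt_const y (1:ℝ)).add ((hasDerivAt_pow 2 y).div_const 2)).add ((hasDerivAt_pow 4 y).div_const 24)).add ((hasDerivAt_pow 6 y).div_const 720)).add ((hasDerivAt_pow 8 y).div_const 40320))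
      convert h1 using 1
      all_goals (try funext z)
      all_goals (try simp only [id_eq, Pi.sub_apply, Pi.add_apply, Pi.mul_apply])
      all_goals (try push_cast)
      all_goals first | rfl | ring)
    (by norm_num) ((fun y hy => by show (0:ℝ) ≤ Real.sinh y - (y + y^3/6 + y^5/120 + y^7/5040); linarith [l7 hy])) hx
  exact sub_nonneg.mp h

lemma l9 {x : ℝ} (hx : 0 ≤ x) : x + x^3/6 + x^5/120 + x^7/5040 + x^9/362880 ≤ Real.sinh x := by
  have h := nn_aux (f := fun y => Real.sinh y - (y + y^3/6 + y^5/120 + y^7/5040 + y^9/362880))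
    (f' := fun y => Real.cosh y - (1 + y^2/2 + y^4/24 + y^6/720 + y^8/40320))
    (fun y => by
      have h1 := (Real.hasDerivAt_sinh y).sub (((((hasDerivAt_id y).add ((hasDerivAt_pow 3 y).div_const 6)).add ((hasDerivAt_pow 5 y).div_const 120)).add ((hasDerivAt_pow 7 y).div_const 5040)).add ((hasDerivAt_pow 9 y).div_const 362880))
      convert h1 using 1
      all_goals (try funext z)
      all_goals (try simp only [id_eq, Pi.sub_apply, Pi.add_apply, Pi.mul_apply])
      all_goals (try push_cast)
      all_goals first | rfl | ring)
    (by norm_num) ((fun y hy => by show (0:ℝ) ≤ Real.cosh y - (1 + y^2/2 + y^4/24 + y^6/720 + y^8/40320); linarith [l8 hy])) hx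
  exact sub_nonneg.mp h

lemma u1 {x : ℝ} (hx : 0 ≤ x) : Real.sinh x ≤ x * Real.cosh x := by
  have h := nn_aux (f := fun y => y * Real.cosh y - Real.sinh y)
    (f' := fun y => y * Real.sinh y)
    (fun y => by
      have h1 := ((hasDerivAt_id y).mul (Real.hasDerivAt_cosh y)).sub (Real.hasDerivAt_sinh y)
      convert h1 using 1
      all_goals (try funext z)
      all_goals (try simp only [id_eq, Pi.sub_apply, Pi.add_apply, Pi.mul_apply])
      all_goals (try push_cast)
      all_goals first | rfl | ring)
    (by simp) (fun y hy => by
      show (0:ℝ) ≤ y * Real.sinh y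
      exact mul_nonneg hy (Real.sinh_nonneg_iff.mpr hy)) hx
  exact sub_nonneg.mp h

lemma u2 {x : ℝ} (hx : 0 ≤ x) : Real.cosh x ≤ 1 + x^2/2 * Real.cosh x := by
  have h := nn_aux (f := fun y => 1 + y^2/2 * Real.cosh y - Real.cosh y)
    (f' := fun y => (y * Real.cosh y + y^2/2 * Real.sinh y) - Real.sinh y)
    (fun y => by
      have h1 := ((hasDerivAt_const y (1:ℝ)).add (((hasDerivAt_pow 2 y).div_const 2).mul (Real.hasDerivAt_cosh y))).sub (Real.hasDerivAt_cosh y)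
      convert h1 using 1
      all_goals (try funext z)
      all_goals (try simp only [id_eq, Pi.sub_apply, Pi.add_apply, Pi.mul_apply])
      all_goals (try push_cast)
      all_goals first | rfl | ring)
    (by norm_num) ((fun y hy => by
      show (0:ℝ) ≤ (y * Real.cosh y + y^2/2 * Real.sinh y) - Real.sinh y
      have h2 := u1 hy
      have hs := Real.sinh_nonneg_iff.mpr hy
      have hp : (0:ℝ) ≤ y^2/2 := by positivity
      nlinarith [mul_nonneg hp hs])) hx
  exact sub_nonneg.mp h

lemma u3 {x : ℝ} (hx : 0 ≤ x) : Real.sinh x ≤ x + x^3/6 * Real.cosh x := by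
  have h := nn_aux (f := fun y => y + y^3/6 * Real.cosh y - Real.sinh y)
    (f' := fun y => 1 + (y^2/2 * Real.cosh y + y^3/6 * Real.sinh y) - Real.cosh y)
    (fun y => by
      have h1 := ((hasDerivAt_id y).add (((hasDerivAt_pow 3 y).div_const 6).mul (Real.hasDerivAt_cosh y))).sub (Real.hasDerivAt_sinh y)
      convert h1 using 1
      all_goals (try funext z)
      all_goals (try simp only [id_eq, Pi.sub_apply, Pi.add_apply, Pi.mul_apply])
      all_goals (try push_cast)
      all_goals first | rfl | ring)
    (by norm_num) ((fun y hy => by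
      show (0:ℝ) ≤ 1 + (y^2/2 * Real.cosh y + y^3/6 * Real.sinh y) - Real.cosh y
      have h2 := u2 hy
      have hs := Real.sinh_nonneg_iff.mpr hy
      have hp : (0:ℝ) ≤ y^3/6 := by positivity
      nlinarith [mul_nonneg hp hs])) hx
  exact sub_nonneg.mp h

lemma u4 {x : ℝ} (hx : 0 ≤ x) : Real.cosh x ≤ 1 + x^2/2 + x^4/24 * Real.cosh x := by
  have h := nn_aux (f := fun y => 1 + y^2/2 + y^4/24 * Real.cosh y - Real.cosh y)
    (f' := fun y => y + (y^3/6 * Real.cosh y + y^4/24 * Real.sinh y) - Real.sinh y)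
    (fun y => by
      have h1 := (((hasDerivAt_const y (1:ℝ)).add ((hasDerivAt_pow 2 y).div_const 2)).add (((hasDerivAt_pow 4 y).div_const 24).mul (Real.hasDerivAt_cosh y))).sub (Real.hasDerivAt_cosh y)
      convert h1 using 1
      all_goals (try funext z)
      all_goals (try simp only [id_eq, Pi.sub_apply, Pi.add_apply, Pi.mul_apply])
      all_goals (try push_cast)
      all_goals first | rfl | ring)
    (by norm_num) ((fun y hy => by
      show (0:ℝ) ≤ y + (y^3/6 * Real.cosh y + y^4/24 * Real.sinh y) - Real.sinh y
      have h2 := u3 hy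
      have hs := Real.sinh_nonneg_iff.mpr hy
      have hp : (0:ℝ) ≤ y^4/24 := by positivity
      nlinarith [mul_nonneg hp hs])) hx
  exact sub_nonneg.mp h

lemma u5 {x : ℝ} (hx : 0 ≤ x) : Real.sinh x ≤ x + x^3/6 + x^5/120 * Real.cosh x := by
  have h := nn_aux (f := fun y => y + y^3/6 + y^5/120 * Real.cosh y - Real.sinh y)
    (f' := fun y => 1 + y^2/2 + (y^4/24 * Real.cosh y + y^5/120 * Real.sinh y) - Real.cosh y)
    (fun y => by
      have h1 := (((hasDerivAt_id y).add ((hasDerivAt_pow 3 y).div_const 6)).add (((hasDerivAt_pow 5 y).div_const 120).mul (Real.hasDerivAt_cosh y))).sub (Real.hasDerivAt_sinh y)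
      convert h1 using 1
      all_goals (try funext z)
      all_goals (try simp only [id_eq, Pi.sub_apply, Pi.add_apply, Pi.mul_apply])
      all_goals (try push_cast)
      all_goals first | rfl | ring)
    (by norm_num) ((fun y hy => by
      show (0:ℝ) ≤ 1 + y^2/2 + (y^4/24 * Real.cosh y + y^5/120 * Real.sinh y) - Real.cosh y
      have h2 := u4 hy
      have hs := Real.sinh_nonneg_iff.mpr hy
      have hp : (0:ℝ) ≤ y^5/120 := by positivity
      nlinarith [mul_nonneg hp hs])) hx
  exact sub_nonneg.mp h

lemma u6 {x : ℝ} (hx : 0 ≤ x) : Real.cosh x ≤ 1 + x^2/2 + x^4/24 + x^6/720 * Real.cosh x := by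
  have h := nn_aux (f := fun y => 1 + y^2/2 + y^4/24 + y^6/720 * Real.cosh y - Real.cosh y)
    (f' := fun y => y + y^3/6 + (y^5/120 * Real.cosh y + y^6/720 * Real.sinh y) - Real.sinh y)
    (fun y => by
      have h1 := ((((hasDerivAt_const y (1:ℝ)).add ((hasDerivAt_pow 2 y).div_const 2)).add ((hasDerivAt_pow 4 y).div_const 24)).add (((hasDerivAt_pow 6 y).div_const 720).mul (Real.hasDerivAt_cosh y))).sub (Real.hasDerivAt_cosh y)
      convert h1 using 1
      all_goals (try funext z)
      all_goals (try simp only [id_eq, Pi.sub_apply, Pi.add_apply, Pi.mul_apply])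
      all_goals (try push_cast)
      all_goals first | rfl | ring)
    (by norm_num) ((fun y hy => by
      show (0:ℝ) ≤ y + y^3/6 + (y^5/120 * Real.cosh y + y^6/720 * Real.sinh y) - Real.sinh y
      have h2 := u5 hy
      have hs := Real.sinh_nonneg_iff.mpr hy
      have hp : (0:ℝ) ≤ y^6/720 := by positivity
      nlinarith [mul_nonneg hp hs])) hx
  exact sub_nonneg.mp h

lemma u7 {x : ℝ} (hx : 0 ≤ x) : Real.sinh x ≤ x + x^3/6 + x^5/120 + x^7/5040 * Real.cosh x := by
  have h := nn_aux (f := fun y => y + y^3/6 + y^5/120 + y^7/5040 * Real.cosh y - Real.sinh y)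
    (f' := fun y => 1 + y^2/2 + y^4/24 + (y^6/720 * Real.cosh y + y^7/5040 * Real.sinh y) - Real.cosh y)
    (fun y => by
      have h1 := ((((hasDerivAt_id y).add ((hasDerivAt_pow 3 y).div_const 6)).add ((hasDerivAt_pow 5 y).div_const 120)).add (((hasDerivAt_pow 7 y).div_const 5040).mul (Real.hasDerivAt_cosh y))).sub (Real.hasDerivAt_sinh y)
      convert h1 using 1
      all_goals (try funext z)
      all_goals (try simp only [id_eq, Pi.sub_apply, Pi.add_apply, Pi.mul_apply])
      all_goals (try push_cast)
      all_goals first | rfl | ring)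
    (by norm_num) ((fun y hy => by
      show (0:ℝ) ≤ 1 + y^2/2 + y^4/24 + (y^6/720 * Real.cosh y + y^7/5040 * Real.sinh y) - Real.cosh y
      have h2 := u6 hy
      have hs := Real.sinh_nonneg_iff.mpr hy
      have hp : (0:ℝ) ≤ y^7/5040 := by positivity
      nlinarith [mul_nonneg hp hs])) hx
  exact sub_nonneg.mp h

lemma u8 {x : ℝ} (hx : 0 ≤ x) : Real.cosh x ≤ 1 + x^2/2 + x^4/24 + x^6/720 + x^8/40320 * Real.cosh x := by
  have h := nn_aux (f := fun y => 1 + y^2/2 + y^4/24 + y^6/720 + y^8/40320 * Real.cosh y - Real.cosh y)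
    (f' := fun y => y + y^3/6 + y^5/120 + (y^7/5040 * Real.cosh y + y^8/40320 * Real.sinh y) - Real.sinh y)
    (fun y => by
      have h1 := (((((hasDerivAt_const y (1:ℝ)).add ((hasDerivAt_pow 2 y).div_const 2)).add ((hasDerivAt_pow 4 y).div_const 24)).add ((hasDerivAt_pow 6 y).div_const 720)).add (((hasDerivAt_pow 8 y).div_const 40320).mul (Real.hasDerivAt_cosh y))).sub (Real.hasDerivAt_cosh y)
      convert h1 using 1
      all_goals (try funext z)
      all_goals (try simp only [id_eq, Pi.sub_apply, Pi.add_apply, Pi.mul_apply])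
      all_goals (try push_cast)
      all_goals first | rfl | ring)
    (by norm_num) ((fun y hy => by
      show (0:ℝ) ≤ y + y^3/6 + y^5/120 + (y^7/5040 * Real.cosh y + y^8/40320 * Real.sinh y) - Real.sinh y
      have h2 := u7 hy
      have hs := Real.sinh_nonneg_iff.mpr hy
      have hp : (0:ℝ) ≤ y^8/40320 := by positivity
      nlinarith [mul_nonneg hp hs])) hx
  exact sub_nonneg.mp h

lemma u9 {x : ℝ} (hx : 0 ≤ x) : Real.sinh x ≤ x + x^3/6 + x^5/120 + x^7/5040 + x^9/362880 * Real.cosh x := by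
  have h := nn_aux (f := fun y => y + y^3/6 + y^5/120 + y^7/5040 + y^9/362880 * Real.cosh y - Real.sinh y)
    (f' := fun y => 1 + y^2/2 + y^4/24 + y^6/720 + (y^8/40320 * Real.cosh y + y^9/362880 * Real.sinh y) - Real.cosh y)
    (fun y => by
      have h1 := (((((hasDerivAt_id y).add ((hasDerivAt_pow 3 y).div_const 6)).add ((hasDerivAt_pow 5 y).div_const 120)).add ((hasDerivAt_pow 7 y).div_const 5040)).add (((hasDerivAt_pow 9 y).div_const 362880).mul (Real.hasDerivAt_cosh y))).sub (Real.hasDerivAt_sinh y)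
      convert h1 using 1
      all_goals (try funext z)
      all_goals (try simp only [id_eq, Pi.sub_apply, Pi.add_apply, Pi.mul_apply])
      all_goals (try push_cast)
      all_goals first | rfl | ring)
    (by norm_num) ((fun y hy => by
      show (0:ℝ) ≤ 1 + y^2/2 + y^4/24 + y^6/720 + (y^8/40320 * Real.cosh y + y^9/362880 * Real.sinh y) - Real.cosh y
      have h2 := u8 hy
      have hs := Real.sinh_nonneg_iff.mpr hy
      have hp : (0:ℝ) ≤ y^9/362880 := by positivity
      nlinarith [mul_nonneg hp hs])) hx
  exact sub_nonneg.mp h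

lemma exp_quartic {x : ℝ} (hx : 0 ≤ x) : 1 + x + x^2/2 + x^3/6 + x^4/24 ≤ Real.exp x := by
  have h := Real.sum_le_exp_of_nonneg hx 5
  simp [Finset.sum_range_succ, Nat.factorial] at h
  linarith

lemma large_t {t : ℝ} (ht : 96/25 ≤ t) : Real.exp ((63663/100000)*t) * t + 1 ≤ Real.exp t := by
  have h0 : (0:ℝ) ≤ t := by linarith
  set q : ℝ := 63663/100000 with hqdef
  set r : ℝ := 36337/100000 with hrdef
  have hsum : q + r = 1 := by norm_num
  have hA : (397/100 : ℝ) ≤ Real.exp (r * (96/25)) := by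
    have := exp_quartic (x := r * (96/25)) (by norm_num)
    have h2 : (397/100 : ℝ) ≤ 1 + r*(96/25) + (r*(96/25))^2/2 + (r*(96/25))^3/6 + (r*(96/25))^4/24 := by
      norm_num
    linarith
  have hB : 1 + r*(t - 96/25) ≤ Real.exp (r*(t - 96/25)) := by
    linarith [Real.add_one_le_exp (r*(t - 96/25))]
  have hBpos : (0:ℝ) ≤ 1 + r*(t - 96/25) := by nlinarith
  have hmul : (397/100) * (1 + r*(t - 96/25)) ≤ Real.exp (r*t) := by
    calc (397/100) * (1 + r*(t - 96/25)) ≤ Real.exp (r * (96/25)) * Real.exp (r*(t - 96/25)) := by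
          apply mul_le_mul hA hB hBpos (Real.exp_nonneg _)
      _ = Real.exp (r*t) := by rw [← Real.exp_add]; ring_nf
  have hrt : t + 1/10 ≤ Real.exp (r*t) := by nlinarith
  have hqt : (10:ℝ) ≤ Real.exp (q*t) := by
    have h1 : (10:ℝ) ≤ Real.exp (q*(96/25)) := by
      have := exp_quartic (x := q * (96/25)) (by norm_num)
      have h2 : (10:ℝ) ≤ 1 + q*(96/25) + (q*(96/25))^2/2 + (q*(96/25))^3/6 + (q*(96/25))^4/24 := by
        norm_num
      linarith
    have h3 : q*(96/25) ≤ q*t := by nlinarith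
    exact h1.trans (Real.exp_le_exp.mpr h3)
  have hsplit : Real.exp t = Real.exp (q*t) * Real.exp (r*t) := by
    rw [← Real.exp_add]
    congr 1
    nlinarith [hsum]
  have hfin : Real.exp (q*t) * (t + 1/10) ≤ Real.exp (q*t) * Real.exp (r*t) := by
    apply mul_le_mul_of_nonneg_left hrt (Real.exp_nonneg _)
  rw [hsplit]
  nlinarith [hqt, hfin, Real.exp_pos (q*t)]

lemma cosh_le_six {x : ℝ} (hx : 0 ≤ x) (hx2 : x ≤ 49/20) : Real.cosh x ≤ 6 := by
  have h := u8 hx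
  have h2 : x^2 ≤ (49/20)^2 := pow_le_pow_left₀ hx hx2 2
  have h4 : x^4 ≤ (49/20)^4 := pow_le_pow_left₀ hx hx2 4
  have h6 : x^6 ≤ (49/20)^6 := pow_le_pow_left₀ hx hx2 6
  have h8 : x^8 ≤ (49/20)^8 := pow_le_pow_left₀ hx hx2 8
  nlinarith [mul_nonneg (sub_nonneg.mpr h8) (Real.cosh_pos x).le, h, h2, h4, h6]

lemma midpoly (t : ℝ) (h0 : 0 ≤ t) (h1 : t ≤ 96/25) :
    t*((63663/100000*t) + (63663/100000*t)^3/6 + (63663/100000*t)^5/120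
      + (63663/100000*t)^7/5040 + (63663/100000*t)^9*6/362880)
    ≤ t + t^3/6 + t^5/120 + t^7/5040 + t^9/362880 := by
  have hb : (0:ℝ) ≤ 96/25 - t := by linarith
  nlinarith [mul_nonneg (pow_nonneg h0 3) hb, mul_nonneg (pow_nonneg h0 4) hb,
    mul_nonneg (pow_nonneg h0 8) hb, mul_nonneg (pow_nonneg h0 5) hb,
    mul_nonneg (pow_nonneg h0 6) hb, mul_nonneg (pow_nonneg h0 7) hb,
    sq_nonneg (t - 147/50), mul_nonneg h0 (sq_nonneg (t - 147/50)),
    mul_nonneg (pow_nonneg h0 2) (sq_nonneg (t - 147/50)),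
    mul_nonneg (pow_nonneg h0 3) (sq_nonneg (t - 147/50)),
    mul_nonneg (pow_nonneg h0 4) (sq_nonneg (t - 147/50)),
    mul_nonneg (pow_nonneg h0 5) (sq_nonneg (t - 147/50)),
    mul_nonneg (pow_nonneg h0 6) (sq_nonneg (t - 147/50)),
    mul_nonneg (pow_nonneg h0 7) (sq_nonneg (t - 147/50))]

theorem stmt6 : ∀ t : ℝ, 0 ≤ t → t * Real.sinh (2 * t / π) ≤ Real.sinh t := by
  intro t ht
  have hpi := Real.pi_gt_d6
  have hpipos := Real.pi_pos
  have hq : 2 * t / π ≤ (63663/100000) * t := by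
    rw [div_le_iff₀ hpipos]
    nlinarith
  have hx0 : (0:ℝ) ≤ 2 * t / π := by positivity
  by_cases hcase : t ≤ 96/25
  · have hs1 : Real.sinh (2*t/π) ≤ Real.sinh ((63663/100000)*t) := Real.sinh_le_sinh.mpr hq
    have hqt0 : (0:ℝ) ≤ (63663/100000)*t := mul_nonneg (by norm_num) ht
    have hqt2 : (63663/100000)*t ≤ 49/20 := by nlinarith
    have hcosh := cosh_le_six hqt0 hqt2
    have hup := u9 hqt0
    have h9 : ((63663/100000)*t)^9/362880 * Real.cosh ((63663/100000)*t)
        ≤ ((63663/100000)*t)^9/362880 * 6 :=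
      mul_le_mul_of_nonneg_left hcosh (by positivity)
    have hlow := l9 ht
    have hpoly := midpoly t ht hcase
    calc t * Real.sinh (2*t/π) ≤ t * Real.sinh ((63663/100000)*t) :=
          mul_le_mul_of_nonneg_left hs1 ht
      _ ≤ t*((63663/100000*t) + (63663/100000*t)^3/6 + (63663/100000*t)^5/120
          + (63663/100000*t)^7/5040 + (63663/100000*t)^9*6/362880) := by
          apply mul_le_mul_of_nonneg_left _ ht
          linarith
      _ ≤ t + t^3/6 + t^5/120 + t^7/5040 + t^9/362880 := hpoly
      _ ≤ Real.sinh t := hlow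
  · push_neg at hcase
    have hlarge := large_t hcase.le
    have hsinh_ub : Real.sinh (2*t/π) ≤ Real.exp ((63663/100000)*t) / 2 := by
      rw [Real.sinh_eq]
      have h1 := Real.exp_le_exp.mpr hq
      have h2 := (Real.exp_pos (-(2*t/π))).le
      linarith
    have hsinh_lb : (Real.exp t - 1)/2 ≤ Real.sinh t := by
      rw [Real.sinh_eq]
      have h1 : Real.exp (-t) ≤ 1 := by
        calc Real.exp (-t) ≤ Real.exp 0 := Real.exp_le_exp.mpr (by linarith)
          _ = 1 := Real.exp_zero
      linarith
    calc t * Real.sinh (2*t/π) ≤ t * (Real.exp ((63663/100000)*t) / 2) :=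
          mul_le_mul_of_nonneg_left hsinh_ub ht
      _ ≤ (Real.exp t - 1)/2 := by nlinarith [hlarge]
      _ ≤ Real.sinh t := hsinh_lb
end

section
/- For all real x > 0, arsinh(x) ≤ (π/2)·arsinh(x/arsinh x); equivalently, arsinh(x)/arsinh(q(x)) ≤ π/2 where q(x) = x/arsinh x. -/
open Real

namespace Stmt10Aux

lemma alpha_lo : (36338009/100000000 : ℝ) ≤ 1 - 2/π := by
  have h0 := Real.pi_pos
  have h1 : 2/π ≤ 63661991/100000000 := by
    rw [div_le_iff₀ h0]; nlinarith [Real.pi_gt_d6]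
  linarith

lemma alpha_hi : (1 - 2/π : ℝ) ≤ 36338030/100000000 := by
  have h0 := Real.pi_pos
  have h1 : (6366197/10000000 : ℝ) ≤ 2/π := by
    rw [le_div_iff₀ h0]; nlinarith [Real.pi_lt_d6]
  linarith

lemma beta_hi : (6/π - 1 : ℝ) ≤ 90985972/100000000 := by
  have h0 := Real.pi_pos
  have h1 : 6/π ≤ 190985972/100000000 := by
    rw [div_le_iff₀ h0]; nlinarith [Real.pi_gt_d6]
  linarith

lemma gamma_lo : (16366197/10000000 : ℝ) ≤ 1 + 2/π := by
  have h0 := Real.pi_pos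
  have h1 : (6366197/10000000 : ℝ) ≤ 2/π := by
    rw [le_div_iff₀ h0]; nlinarith [Real.pi_lt_d6]
  linarith

lemma taylor11 {x : ℝ} (hx : 0 ≤ x) :
    1 + x + x^2/2 + x^3/6 + x^4/24 + x^5/120 + x^6/720 + x^7/5040 + x^8/40320
      + x^9/362880 + x^10/3628800 ≤ Real.exp x := by
  have h := Real.sum_le_exp_of_nonneg hx 11
  rw [Finset.sum_range_succ, Finset.sum_range_succ, Finset.sum_range_succ,
    Finset.sum_range_succ, Finset.sum_range_succ, Finset.sum_range_succ,
    Finset.sum_range_succ, Finset.sum_range_succ, Finset.sum_range_succ,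
    Finset.sum_range_succ, Finset.sum_range_one] at h
  norm_num [Nat.factorial] at h
  linarith

lemma taylor5 {x : ℝ} (hx : 0 ≤ x) :
    1 + x + x^2/2 + x^3/6 + x^4/24 ≤ Real.exp x := by
  have h := Real.sum_le_exp_of_nonneg hx 5
  rw [Finset.sum_range_succ, Finset.sum_range_succ, Finset.sum_range_succ,
    Finset.sum_range_succ, Finset.sum_range_one] at h
  norm_num [Nat.factorial] at h
  linarith

lemma exp_ub6 {x : ℝ} (h0 : 0 ≤ x) (h1 : x ≤ 1) :
    Real.exp x ≤ 1 + x + x^2/2 + x^3/6 + x^4/24 + x^5/120 + x^6*7/4320 := by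
  have h := Real.exp_bound' h0 h1 (n := 6) (by norm_num)
  rw [Finset.sum_range_succ, Finset.sum_range_succ, Finset.sum_range_succ,
    Finset.sum_range_succ, Finset.sum_range_succ, Finset.sum_range_one] at h
  norm_num [Nat.factorial] at h
  linarith


lemma ea0 : (11121431/5000000 : ℝ) ≤ Real.exp ((1 - 2/π) * (11/5 : ℝ)) := by
  have h1 : (7994361/10000000 : ℝ) ≤ (1 - 2/π) * (11/5 : ℝ) := by nlinarith [alpha_lo]
  refine le_trans ?_ (Real.exp_le_exp.mpr h1)
  have h2 := taylor11 (show (0:ℝ) ≤ (7994361/10000000 : ℝ) by norm_num)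
  nlinarith [h2]

lemma eb0 : (1351059/10000000 : ℝ) ≤ Real.exp (-((6/π - 1) * (11/5 : ℝ))) := by
  have h1 : (6/π - 1) * (11/5 : ℝ) ≤ (10008457/5000000 : ℝ) := by nlinarith [beta_hi]
  refine le_trans ?_ (Real.exp_le_exp.mpr (neg_le_neg h1))
  rw [Real.exp_neg]
  have h3 : Real.exp ((10008457/20000000 : ℝ)) ≤ (8247103/5000000 : ℝ) := by
    have h := exp_ub6 (show (0:ℝ) ≤ (10008457/20000000 : ℝ) by norm_num) (by norm_num)
    nlinarith [h]
  have h4 : Real.exp ((10008457/5000000 : ℝ)) ≤ (8247103/5000000 : ℝ)^4 := by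
    have hq : ((10008457/5000000 : ℝ)) = ((4:ℕ):ℝ) * (10008457/20000000 : ℝ) := by norm_num
    rw [hq, Real.exp_nat_mul]
    exact pow_le_pow_left₀ (Real.exp_pos _).le h3 4
  have h5 : ((8247103/5000000 : ℝ)^4)⁻¹ ≤ (Real.exp ((10008457/5000000 : ℝ)))⁻¹ :=
    inv_anti₀ (Real.exp_pos _) h4
  refine le_trans ?_ h5
  norm_num

lemma eg0 : Real.exp (-((1 + 2/π) * (11/5 : ℝ))) ≤ (34179/1250000 : ℝ) := by
  have h1 : (36005633/10000000 : ℝ) ≤ (1 + 2/π) * (11/5 : ℝ) := by nlinarith [gamma_lo]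
  refine le_trans (Real.exp_le_exp.mpr (neg_le_neg h1)) ?_
  rw [Real.exp_neg]
  have h3 : (182861229/5000000 : ℝ) ≤ Real.exp ((36005633/10000000 : ℝ)) := by
    have h2 := taylor11 (show (0:ℝ) ≤ (36005633/10000000 : ℝ) by norm_num)
    nlinarith [h2]
  have h5 : (Real.exp ((36005633/10000000 : ℝ)))⁻¹ ≤ ((182861229/5000000 : ℝ))⁻¹ :=
    inv_anti₀ (by norm_num) h3
  refine le_trans h5 ?_
  norm_num

lemma piece0 {a : ℝ} (h1 : (11/5 : ℝ) ≤ a) (h2 : a ≤ (12/5 : ℝ)) :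
    a ≤ Real.exp ((1 - 2/π) * a) + Real.exp (-((6/π - 1) * a)) - Real.exp (-((1 + 2/π) * a)) := by
  have hd0 : (0:ℝ) ≤ a - (11/5 : ℝ) := by linarith
  have hdh : a - (11/5 : ℝ) ≤ (1/5 : ℝ) := by linarith
  have eA : Real.exp ((1 - 2/π) * a)
      = Real.exp ((1 - 2/π) * (11/5 : ℝ)) * Real.exp ((1 - 2/π) * (a - (11/5 : ℝ))) := by
    rw [← Real.exp_add]; congr 1; ring
  have eB : Real.exp (-((6/π - 1) * a))
      = Real.exp (-((6/π - 1) * (11/5 : ℝ))) * Real.exp (-((6/π - 1) * (a - (11/5 : ℝ)))) := by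
    rw [← Real.exp_add]; congr 1; ring
  have tA : (1:ℝ) + 36338009/100000000 * (a - (11/5 : ℝ)) ≤ Real.exp ((1 - 2/π) * (a - (11/5 : ℝ))) := by
    have hm := mul_le_mul_of_nonneg_right alpha_lo hd0
    have h := Real.add_one_le_exp ((1 - 2/π) * (a - (11/5 : ℝ)))
    linarith [hm, h]
  have tB : (1:ℝ) - 90985972/100000000 * (a - (11/5 : ℝ)) ≤ Real.exp (-((6/π - 1) * (a - (11/5 : ℝ)))) := by
    have hm := mul_le_mul_of_nonneg_right beta_hi hd0
    have h := Real.add_one_le_exp (-((6/π - 1) * (a - (11/5 : ℝ))))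
    linarith [hm, h]
  have lA : (11121431/5000000 : ℝ) * (1 + 36338009/100000000 * (a - (11/5 : ℝ))) ≤ Real.exp ((1 - 2/π) * a) := by
    rw [eA]
    have := mul_le_mul (ea0) tA (by nlinarith) (Real.exp_pos _).le
    linarith
  have lB : (1351059/10000000 : ℝ) * (1 - 90985972/100000000 * (a - (11/5 : ℝ))) ≤ Real.exp (-((6/π - 1) * a)) := by
    rw [eB]
    have := mul_le_mul (eb0) tB (by nlinarith) (Real.exp_pos _).le
    linarith
  have lC : Real.exp (-((1 + 2/π) * a)) ≤ (34179/1250000 : ℝ) := by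
    refine le_trans ?_ (eg0)
    apply Real.exp_le_exp.mpr
    nlinarith [gamma_lo, mul_le_mul_of_nonneg_left hd0 (le_trans (by norm_num) gamma_lo)]
  linarith [lA, lB, lC]


lemma ea1 : (11959789/5000000 : ℝ) ≤ Real.exp ((1 - 2/π) * (12/5 : ℝ)) := by
  have h1 : (4360561/5000000 : ℝ) ≤ (1 - 2/π) * (12/5 : ℝ) := by nlinarith [alpha_lo]
  refine le_trans ?_ (Real.exp_le_exp.mpr h1)
  have h2 := taylor11 (show (0:ℝ) ≤ (4360561/5000000 : ℝ) by norm_num)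
  nlinarith [h2]

lemma eb1 : (1126273/10000000 : ℝ) ≤ Real.exp (-((6/π - 1) * (12/5 : ℝ))) := by
  have h1 : (6/π - 1) * (12/5 : ℝ) ≤ (10918317/5000000 : ℝ) := by nlinarith [beta_hi]
  refine le_trans ?_ (Real.exp_le_exp.mpr (neg_le_neg h1))
  rw [Real.exp_neg]
  have h3 : Real.exp ((10918317/20000000 : ℝ)) ≤ (17261917/10000000 : ℝ) := by
    have h := exp_ub6 (show (0:ℝ) ≤ (10918317/20000000 : ℝ) by norm_num) (by norm_num)
    nlinarith [h]
  have h4 : Real.exp ((10918317/5000000 : ℝ)) ≤ (17261917/10000000 : ℝ)^4 := by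
    have hq : ((10918317/5000000 : ℝ)) = ((4:ℕ):ℝ) * (10918317/20000000 : ℝ) := by norm_num
    rw [hq, Real.exp_nat_mul]
    exact pow_le_pow_left₀ (Real.exp_pos _).le h3 4
  have h5 : ((17261917/10000000 : ℝ)^4)⁻¹ ≤ (Real.exp ((10918317/5000000 : ℝ)))⁻¹ :=
    inv_anti₀ (Real.exp_pos _) h4
  refine le_trans ?_ h5
  norm_num

lemma eg1 : Real.exp (-((1 + 2/π) * (12/5 : ℝ))) ≤ (98671/5000000 : ℝ) := by
  have h1 : (4909859/1250000 : ℝ) ≤ (1 + 2/π) * (12/5 : ℝ) := by nlinarith [gamma_lo]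
  refine le_trans (Real.exp_le_exp.mpr (neg_le_neg h1)) ?_
  rw [Real.exp_neg]
  have h3 : (20269457/400000 : ℝ) ≤ Real.exp ((4909859/1250000 : ℝ)) := by
    have h2 := taylor11 (show (0:ℝ) ≤ (4909859/1250000 : ℝ) by norm_num)
    nlinarith [h2]
  have h5 : (Real.exp ((4909859/1250000 : ℝ)))⁻¹ ≤ ((20269457/400000 : ℝ))⁻¹ :=
    inv_anti₀ (by norm_num) h3
  refine le_trans h5 ?_
  norm_num

lemma piece1 {a : ℝ} (h1 : (12/5 : ℝ) ≤ a) (h2 : a ≤ (13/5 : ℝ)) :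
    a ≤ Real.exp ((1 - 2/π) * a) + Real.exp (-((6/π - 1) * a)) - Real.exp (-((1 + 2/π) * a)) := by
  have hd0 : (0:ℝ) ≤ a - (12/5 : ℝ) := by linarith
  have hdh : a - (12/5 : ℝ) ≤ (1/5 : ℝ) := by linarith
  have eA : Real.exp ((1 - 2/π) * a)
      = Real.exp ((1 - 2/π) * (12/5 : ℝ)) * Real.exp ((1 - 2/π) * (a - (12/5 : ℝ))) := by
    rw [← Real.exp_add]; congr 1; ring
  have eB : Real.exp (-((6/π - 1) * a))
      = Real.exp (-((6/π - 1) * (12/5 : ℝ))) * Real.exp (-((6/π - 1) * (a - (12/5 : ℝ)))) := by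
    rw [← Real.exp_add]; congr 1; ring
  have tA : (1:ℝ) + 36338009/100000000 * (a - (12/5 : ℝ)) ≤ Real.exp ((1 - 2/π) * (a - (12/5 : ℝ))) := by
    have hm := mul_le_mul_of_nonneg_right alpha_lo hd0
    have h := Real.add_one_le_exp ((1 - 2/π) * (a - (12/5 : ℝ)))
    linarith [hm, h]
  have tB : (1:ℝ) - 90985972/100000000 * (a - (12/5 : ℝ)) ≤ Real.exp (-((6/π - 1) * (a - (12/5 : ℝ)))) := by
    have hm := mul_le_mul_of_nonneg_right beta_hi hd0
    have h := Real.add_one_le_exp (-((6/π - 1) * (a - (12/5 : ℝ))))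
    linarith [hm, h]
  have lA : (11959789/5000000 : ℝ) * (1 + 36338009/100000000 * (a - (12/5 : ℝ))) ≤ Real.exp ((1 - 2/π) * a) := by
    rw [eA]
    have := mul_le_mul (ea1) tA (by nlinarith) (Real.exp_pos _).le
    linarith
  have lB : (1126273/10000000 : ℝ) * (1 - 90985972/100000000 * (a - (12/5 : ℝ))) ≤ Real.exp (-((6/π - 1) * a)) := by
    rw [eB]
    have := mul_le_mul (eb1) tB (by nlinarith) (Real.exp_pos _).le
    linarith
  have lC : Real.exp (-((1 + 2/π) * a)) ≤ (98671/5000000 : ℝ) := by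
    refine le_trans ?_ (eg1)
    apply Real.exp_le_exp.mpr
    nlinarith [gamma_lo, mul_le_mul_of_nonneg_left hd0 (le_trans (by norm_num) gamma_lo)]
  linarith [lA, lB, lC]


lemma ea2 : (6430671/2500000 : ℝ) ≤ Real.exp ((1 - 2/π) * (13/5 : ℝ)) := by
  have h1 : (4723941/5000000 : ℝ) ≤ (1 - 2/π) * (13/5 : ℝ) := by nlinarith [alpha_lo]
  refine le_trans ?_ (Real.exp_le_exp.mpr h1)
  have h2 := taylor11 (show (0:ℝ) ≤ (4723941/5000000 : ℝ) by norm_num)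
  nlinarith [h2]

lemma eb2 : (938887/10000000 : ℝ) ≤ Real.exp (-((6/π - 1) * (13/5 : ℝ))) := by
  have h1 : (6/π - 1) * (13/5 : ℝ) ≤ (23656353/10000000 : ℝ) := by nlinarith [beta_hi]
  refine le_trans ?_ (Real.exp_le_exp.mpr (neg_le_neg h1))
  rw [Real.exp_neg]
  have h3 : Real.exp ((23656353/40000000 : ℝ)) ≤ (9032681/5000000 : ℝ) := by
    have h := exp_ub6 (show (0:ℝ) ≤ (23656353/40000000 : ℝ) by norm_num) (by norm_num)
    nlinarith [h]
  have h4 : Real.exp ((23656353/10000000 : ℝ)) ≤ (9032681/5000000 : ℝ)^4 := by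
    have hq : ((23656353/10000000 : ℝ)) = ((4:ℕ):ℝ) * (23656353/40000000 : ℝ) := by norm_num
    rw [hq, Real.exp_nat_mul]
    exact pow_le_pow_left₀ (Real.exp_pos _).le h3 4
  have h5 : ((9032681/5000000 : ℝ)^4)⁻¹ ≤ (Real.exp ((23656353/10000000 : ℝ)))⁻¹ :=
    inv_anti₀ (Real.exp_pos _) h4
  refine le_trans ?_ h5
  norm_num

lemma eg2 : Real.exp (-((1 + 2/π) * (13/5 : ℝ))) ≤ (142539/10000000 : ℝ) := by
  have h1 : (2659507/625000 : ℝ) ≤ (1 + 2/π) * (13/5 : ℝ) := by nlinarith [gamma_lo]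
  refine le_trans (Real.exp_le_exp.mpr (neg_le_neg h1)) ?_
  rw [Real.exp_neg]
  have h3 : (350782179/5000000 : ℝ) ≤ Real.exp ((2659507/625000 : ℝ)) := by
    have h2 := taylor11 (show (0:ℝ) ≤ (2659507/625000 : ℝ) by norm_num)
    nlinarith [h2]
  have h5 : (Real.exp ((2659507/625000 : ℝ)))⁻¹ ≤ ((350782179/5000000 : ℝ))⁻¹ :=
    inv_anti₀ (by norm_num) h3
  refine le_trans h5 ?_
  norm_num

lemma piece2 {a : ℝ} (h1 : (13/5 : ℝ) ≤ a) (h2 : a ≤ (14/5 : ℝ)) :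
    a ≤ Real.exp ((1 - 2/π) * a) + Real.exp (-((6/π - 1) * a)) - Real.exp (-((1 + 2/π) * a)) := by
  have hd0 : (0:ℝ) ≤ a - (13/5 : ℝ) := by linarith
  have hdh : a - (13/5 : ℝ) ≤ (1/5 : ℝ) := by linarith
  have eA : Real.exp ((1 - 2/π) * a)
      = Real.exp ((1 - 2/π) * (13/5 : ℝ)) * Real.exp ((1 - 2/π) * (a - (13/5 : ℝ))) := by
    rw [← Real.exp_add]; congr 1; ring
  have eB : Real.exp (-((6/π - 1) * a))
      = Real.exp (-((6/π - 1) * (13/5 : ℝ))) * Real.exp (-((6/π - 1) * (a - (13/5 : ℝ)))) := by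
    rw [← Real.exp_add]; congr 1; ring
  have tA : (1:ℝ) + 36338009/100000000 * (a - (13/5 : ℝ)) ≤ Real.exp ((1 - 2/π) * (a - (13/5 : ℝ))) := by
    have hm := mul_le_mul_of_nonneg_right alpha_lo hd0
    have h := Real.add_one_le_exp ((1 - 2/π) * (a - (13/5 : ℝ)))
    linarith [hm, h]
  have tB : (1:ℝ) - 90985972/100000000 * (a - (13/5 : ℝ)) ≤ Real.exp (-((6/π - 1) * (a - (13/5 : ℝ)))) := by
    have hm := mul_le_mul_of_nonneg_right beta_hi hd0
    have h := Real.add_one_le_exp (-((6/π - 1) * (a - (13/5 : ℝ))))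
    linarith [hm, h]
  have lA : (6430671/2500000 : ℝ) * (1 + 36338009/100000000 * (a - (13/5 : ℝ))) ≤ Real.exp ((1 - 2/π) * a) := by
    rw [eA]
    have := mul_le_mul (ea2) tA (by nlinarith) (Real.exp_pos _).le
    linarith
  have lB : (938887/10000000 : ℝ) * (1 - 90985972/100000000 * (a - (13/5 : ℝ))) ≤ Real.exp (-((6/π - 1) * a)) := by
    rw [eB]
    have := mul_le_mul (eb2) tB (by nlinarith) (Real.exp_pos _).le
    linarith
  have lC : Real.exp (-((1 + 2/π) * a)) ≤ (142539/10000000 : ℝ) := by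
    refine le_trans ?_ (eg2)
    apply Real.exp_le_exp.mpr
    nlinarith [gamma_lo, mul_le_mul_of_nonneg_left hd0 (le_trans (by norm_num) gamma_lo)]
  linarith [lA, lB, lC]


lemma ea3 : (27661713/10000000 : ℝ) ≤ Real.exp ((1 - 2/π) * (14/5 : ℝ)) := by
  have h1 : (5087321/5000000 : ℝ) ≤ (1 - 2/π) * (14/5 : ℝ) := by nlinarith [alpha_lo]
  refine le_trans ?_ (Real.exp_le_exp.mpr h1)
  have h2 := taylor11 (show (0:ℝ) ≤ (5087321/5000000 : ℝ) by norm_num)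
  nlinarith [h2]

lemma eb3 : (195669/2500000 : ℝ) ≤ Real.exp (-((6/π - 1) * (14/5 : ℝ))) := by
  have h1 : (6/π - 1) * (14/5 : ℝ) ≤ (25476073/10000000 : ℝ) := by nlinarith [beta_hi]
  refine le_trans ?_ (Real.exp_le_exp.mpr (neg_le_neg h1))
  rw [Real.exp_neg]
  have h3 : Real.exp ((25476073/40000000 : ℝ)) ≤ (18906207/10000000 : ℝ) := by
    have h := exp_ub6 (show (0:ℝ) ≤ (25476073/40000000 : ℝ) by norm_num) (by norm_num)
    nlinarith [h]
  have h4 : Real.exp ((25476073/10000000 : ℝ)) ≤ (18906207/10000000 : ℝ)^4 := by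
    have hq : ((25476073/10000000 : ℝ)) = ((4:ℕ):ℝ) * (25476073/40000000 : ℝ) := by norm_num
    rw [hq, Real.exp_nat_mul]
    exact pow_le_pow_left₀ (Real.exp_pos _).le h3 4
  have h5 : ((18906207/10000000 : ℝ)^4)⁻¹ ≤ (Real.exp ((25476073/10000000 : ℝ)))⁻¹ :=
    inv_anti₀ (Real.exp_pos _) h4
  refine le_trans ?_ h5
  norm_num

lemma eg3 : Real.exp (-((1 + 2/π) * (14/5 : ℝ))) ≤ (10307/1000000 : ℝ) := by
  have h1 : (45825351/10000000 : ℝ) ≤ (1 + 2/π) * (14/5 : ℝ) := by nlinarith [gamma_lo]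
  refine le_trans (Real.exp_le_exp.mpr (neg_le_neg h1)) ?_
  rw [Real.exp_neg]
  have h3 : (194043053/2000000 : ℝ) ≤ Real.exp ((45825351/10000000 : ℝ)) := by
    have h2 := taylor11 (show (0:ℝ) ≤ (45825351/10000000 : ℝ) by norm_num)
    nlinarith [h2]
  have h5 : (Real.exp ((45825351/10000000 : ℝ)))⁻¹ ≤ ((194043053/2000000 : ℝ))⁻¹ :=
    inv_anti₀ (by norm_num) h3
  refine le_trans h5 ?_
  norm_num

lemma piece3 {a : ℝ} (h1 : (14/5 : ℝ) ≤ a) (h2 : a ≤ (3 : ℝ)) :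
    a ≤ Real.exp ((1 - 2/π) * a) + Real.exp (-((6/π - 1) * a)) - Real.exp (-((1 + 2/π) * a)) := by
  have hd0 : (0:ℝ) ≤ a - (14/5 : ℝ) := by linarith
  have hdh : a - (14/5 : ℝ) ≤ (1/5 : ℝ) := by linarith
  have eA : Real.exp ((1 - 2/π) * a)
      = Real.exp ((1 - 2/π) * (14/5 : ℝ)) * Real.exp ((1 - 2/π) * (a - (14/5 : ℝ))) := by
    rw [← Real.exp_add]; congr 1; ring
  have eB : Real.exp (-((6/π - 1) * a))
      = Real.exp (-((6/π - 1) * (14/5 : ℝ))) * Real.exp (-((6/π - 1) * (a - (14/5 : ℝ)))) := by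
    rw [← Real.exp_add]; congr 1; ring
  have tA : (1:ℝ) + 36338009/100000000 * (a - (14/5 : ℝ)) ≤ Real.exp ((1 - 2/π) * (a - (14/5 : ℝ))) := by
    have hm := mul_le_mul_of_nonneg_right alpha_lo hd0
    have h := Real.add_one_le_exp ((1 - 2/π) * (a - (14/5 : ℝ)))
    linarith [hm, h]
  have tB : (1:ℝ) - 90985972/100000000 * (a - (14/5 : ℝ)) ≤ Real.exp (-((6/π - 1) * (a - (14/5 : ℝ)))) := by
    have hm := mul_le_mul_of_nonneg_right beta_hi hd0
    have h := Real.add_one_le_exp (-((6/π - 1) * (a - (14/5 : ℝ))))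
    linarith [hm, h]
  have lA : (27661713/10000000 : ℝ) * (1 + 36338009/100000000 * (a - (14/5 : ℝ))) ≤ Real.exp ((1 - 2/π) * a) := by
    rw [eA]
    have := mul_le_mul (ea3) tA (by nlinarith) (Real.exp_pos _).le
    linarith
  have lB : (195669/2500000 : ℝ) * (1 - 90985972/100000000 * (a - (14/5 : ℝ))) ≤ Real.exp (-((6/π - 1) * a)) := by
    rw [eB]
    have := mul_le_mul (eb3) tB (by nlinarith) (Real.exp_pos _).le
    linarith
  have lC : Real.exp (-((1 + 2/π) * a)) ≤ (10307/1000000 : ℝ) := by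
    refine le_trans ?_ (eg3)
    apply Real.exp_le_exp.mpr
    nlinarith [gamma_lo, mul_le_mul_of_nonneg_left hd0 (le_trans (by norm_num) gamma_lo)]
  linarith [lA, lB, lC]


lemma ea4 : (2974691/1000000 : ℝ) ≤ Real.exp ((1 - 2/π) * (3 : ℝ)) := by
  have h1 : (5450701/5000000 : ℝ) ≤ (1 - 2/π) * (3 : ℝ) := by nlinarith [alpha_lo]
  refine le_trans ?_ (Real.exp_le_exp.mpr h1)
  have h2 := taylor11 (show (0:ℝ) ≤ (5450701/5000000 : ℝ) by norm_num)
  nlinarith [h2]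

lemma eb4 : (81557/1250000 : ℝ) ≤ Real.exp (-((6/π - 1) * (3 : ℝ))) := by
  have h1 : (6/π - 1) * (3 : ℝ) ≤ (1705987/625000 : ℝ) := by nlinarith [beta_hi]
  refine le_trans ?_ (Real.exp_le_exp.mpr (neg_le_neg h1))
  rw [Real.exp_neg]
  have h3 : Real.exp ((1705987/2500000 : ℝ)) ≤ (19786189/10000000 : ℝ) := by
    have h := exp_ub6 (show (0:ℝ) ≤ (1705987/2500000 : ℝ) by norm_num) (by norm_num)
    nlinarith [h]
  have h4 : Real.exp ((1705987/625000 : ℝ)) ≤ (19786189/10000000 : ℝ)^4 := by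
    have hq : ((1705987/625000 : ℝ)) = ((4:ℕ):ℝ) * (1705987/2500000 : ℝ) := by norm_num
    rw [hq, Real.exp_nat_mul]
    exact pow_le_pow_left₀ (Real.exp_pos _).le h3 4
  have h5 : ((19786189/10000000 : ℝ)^4)⁻¹ ≤ (Real.exp ((1705987/625000 : ℝ)))⁻¹ :=
    inv_anti₀ (Real.exp_pos _) h4
  refine le_trans ?_ h5
  norm_num

lemma eg4 : Real.exp (-((1 + 2/π) * (3 : ℝ))) ≤ (74641/10000000 : ℝ) := by
  have h1 : (49098591/10000000 : ℝ) ≤ (1 + 2/π) * (3 : ℝ) := by nlinarith [gamma_lo]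
  refine le_trans (Real.exp_le_exp.mpr (neg_le_neg h1)) ?_
  rw [Real.exp_neg]
  have h3 : (1339748093/10000000 : ℝ) ≤ Real.exp ((49098591/10000000 : ℝ)) := by
    have h2 := taylor11 (show (0:ℝ) ≤ (49098591/10000000 : ℝ) by norm_num)
    nlinarith [h2]
  have h5 : (Real.exp ((49098591/10000000 : ℝ)))⁻¹ ≤ ((1339748093/10000000 : ℝ))⁻¹ :=
    inv_anti₀ (by norm_num) h3
  refine le_trans h5 ?_
  norm_num

lemma piece4 {a : ℝ} (h1 : (3 : ℝ) ≤ a) (h2 : a ≤ (16/5 : ℝ)) :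
    a ≤ Real.exp ((1 - 2/π) * a) + Real.exp (-((6/π - 1) * a)) - Real.exp (-((1 + 2/π) * a)) := by
  have hd0 : (0:ℝ) ≤ a - (3 : ℝ) := by linarith
  have hdh : a - (3 : ℝ) ≤ (1/5 : ℝ) := by linarith
  have eA : Real.exp ((1 - 2/π) * a)
      = Real.exp ((1 - 2/π) * (3 : ℝ)) * Real.exp ((1 - 2/π) * (a - (3 : ℝ))) := by
    rw [← Real.exp_add]; congr 1; ring
  have eB : Real.exp (-((6/π - 1) * a))
      = Real.exp (-((6/π - 1) * (3 : ℝ))) * Real.exp (-((6/π - 1) * (a - (3 : ℝ)))) := by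
    rw [← Real.exp_add]; congr 1; ring
  have tA : (1:ℝ) + 36338009/100000000 * (a - (3 : ℝ)) ≤ Real.exp ((1 - 2/π) * (a - (3 : ℝ))) := by
    have hm := mul_le_mul_of_nonneg_right alpha_lo hd0
    have h := Real.add_one_le_exp ((1 - 2/π) * (a - (3 : ℝ)))
    linarith [hm, h]
  have tB : (1:ℝ) - 90985972/100000000 * (a - (3 : ℝ)) ≤ Real.exp (-((6/π - 1) * (a - (3 : ℝ)))) := by
    have hm := mul_le_mul_of_nonneg_right beta_hi hd0
    have h := Real.add_one_le_exp (-((6/π - 1) * (a - (3 : ℝ))))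
    linarith [hm, h]
  have lA : (2974691/1000000 : ℝ) * (1 + 36338009/100000000 * (a - (3 : ℝ))) ≤ Real.exp ((1 - 2/π) * a) := by
    rw [eA]
    have := mul_le_mul (ea4) tA (by nlinarith) (Real.exp_pos _).le
    linarith
  have lB : (81557/1250000 : ℝ) * (1 - 90985972/100000000 * (a - (3 : ℝ))) ≤ Real.exp (-((6/π - 1) * a)) := by
    rw [eB]
    have := mul_le_mul (eb4) tB (by nlinarith) (Real.exp_pos _).le
    linarith
  have lC : Real.exp (-((1 + 2/π) * a)) ≤ (74641/10000000 : ℝ) := by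
    refine le_trans ?_ (eg4)
    apply Real.exp_le_exp.mpr
    nlinarith [gamma_lo, mul_le_mul_of_nonneg_left hd0 (le_trans (by norm_num) gamma_lo)]
  linarith [lA, lB, lC]


lemma ea5 : (7997323/2500000 : ℝ) ≤ Real.exp ((1 - 2/π) * (16/5 : ℝ)) := by
  have h1 : (5814081/5000000 : ℝ) ≤ (1 - 2/π) * (16/5 : ℝ) := by nlinarith [alpha_lo]
  refine le_trans ?_ (Real.exp_le_exp.mpr h1)
  have h2 := taylor11 (show (0:ℝ) ≤ (5814081/5000000 : ℝ) by norm_num)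
  nlinarith [h2]

lemma eb5 : (543901/10000000 : ℝ) ≤ Real.exp (-((6/π - 1) * (16/5 : ℝ))) := by
  have h1 : (6/π - 1) * (16/5 : ℝ) ≤ (3639439/1250000 : ℝ) := by nlinarith [beta_hi]
  refine le_trans ?_ (Real.exp_le_exp.mpr (neg_le_neg h1))
  rw [Real.exp_neg]
  have h3 : Real.exp ((3639439/5000000 : ℝ)) ≤ (20707131/10000000 : ℝ) := by
    have h := exp_ub6 (show (0:ℝ) ≤ (3639439/5000000 : ℝ) by norm_num) (by norm_num)
    nlinarith [h]
  have h4 : Real.exp ((3639439/1250000 : ℝ)) ≤ (20707131/10000000 : ℝ)^4 := by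
    have hq : ((3639439/1250000 : ℝ)) = ((4:ℕ):ℝ) * (3639439/5000000 : ℝ) := by norm_num
    rw [hq, Real.exp_nat_mul]
    exact pow_le_pow_left₀ (Real.exp_pos _).le h3 4
  have h5 : ((20707131/10000000 : ℝ)^4)⁻¹ ≤ (Real.exp ((3639439/1250000 : ℝ)))⁻¹ :=
    inv_anti₀ (Real.exp_pos _) h4
  refine le_trans ?_ h5
  norm_num

lemma eg5 : Real.exp (-((1 + 2/π) * (16/5 : ℝ))) ≤ (13539/2500000 : ℝ) := by
  have h1 : (5237183/1000000 : ℝ) ≤ (1 + 2/π) * (16/5 : ℝ) := by nlinarith [gamma_lo]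
  refine le_trans (Real.exp_le_exp.mpr (neg_le_neg h1)) ?_
  rw [Real.exp_neg]
  have h3 : (1846531157/10000000 : ℝ) ≤ Real.exp ((5237183/1000000 : ℝ)) := by
    have h2 := taylor11 (show (0:ℝ) ≤ (5237183/1000000 : ℝ) by norm_num)
    nlinarith [h2]
  have h5 : (Real.exp ((5237183/1000000 : ℝ)))⁻¹ ≤ ((1846531157/10000000 : ℝ))⁻¹ :=
    inv_anti₀ (by norm_num) h3
  refine le_trans h5 ?_
  norm_num

lemma piece5 {a : ℝ} (h1 : (16/5 : ℝ) ≤ a) (h2 : a ≤ (33/10 : ℝ)) :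
    a ≤ Real.exp ((1 - 2/π) * a) + Real.exp (-((6/π - 1) * a)) - Real.exp (-((1 + 2/π) * a)) := by
  have hd0 : (0:ℝ) ≤ a - (16/5 : ℝ) := by linarith
  have hdh : a - (16/5 : ℝ) ≤ (1/10 : ℝ) := by linarith
  have eA : Real.exp ((1 - 2/π) * a)
      = Real.exp ((1 - 2/π) * (16/5 : ℝ)) * Real.exp ((1 - 2/π) * (a - (16/5 : ℝ))) := by
    rw [← Real.exp_add]; congr 1; ring
  have eB : Real.exp (-((6/π - 1) * a))
      = Real.exp (-((6/π - 1) * (16/5 : ℝ))) * Real.exp (-((6/π - 1) * (a - (16/5 : ℝ)))) := by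
    rw [← Real.exp_add]; congr 1; ring
  have tA : (1:ℝ) + 36338009/100000000 * (a - (16/5 : ℝ)) ≤ Real.exp ((1 - 2/π) * (a - (16/5 : ℝ))) := by
    have hm := mul_le_mul_of_nonneg_right alpha_lo hd0
    have h := Real.add_one_le_exp ((1 - 2/π) * (a - (16/5 : ℝ)))
    linarith [hm, h]
  have tB : (1:ℝ) - 90985972/100000000 * (a - (16/5 : ℝ)) ≤ Real.exp (-((6/π - 1) * (a - (16/5 : ℝ)))) := by
    have hm := mul_le_mul_of_nonneg_right beta_hi hd0
    have h := Real.add_one_le_exp (-((6/π - 1) * (a - (16/5 : ℝ))))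
    linarith [hm, h]
  have lA : (7997323/2500000 : ℝ) * (1 + 36338009/100000000 * (a - (16/5 : ℝ))) ≤ Real.exp ((1 - 2/π) * a) := by
    rw [eA]
    have := mul_le_mul (ea5) tA (by nlinarith) (Real.exp_pos _).le
    linarith
  have lB : (543901/10000000 : ℝ) * (1 - 90985972/100000000 * (a - (16/5 : ℝ))) ≤ Real.exp (-((6/π - 1) * a)) := by
    rw [eB]
    have := mul_le_mul (eb5) tB (by nlinarith) (Real.exp_pos _).le
    linarith
  have lC : Real.exp (-((1 + 2/π) * a)) ≤ (13539/2500000 : ℝ) := by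
    refine le_trans ?_ (eg5)
    apply Real.exp_le_exp.mpr
    nlinarith [gamma_lo, mul_le_mul_of_nonneg_left hd0 (le_trans (by norm_num) gamma_lo)]
  linarith [lA, lB, lC]


lemma Flem {a : ℝ} (h1 : (22/10 : ℝ) ≤ a) (h2 : a ≤ (33/10 : ℝ)) :
    a ≤ Real.exp ((1 - 2/π) * a) + Real.exp (-((6/π - 1) * a)) - Real.exp (-((1 + 2/π) * a)) := by
  rcases le_or_gt a (24/10) with h | h
  · exact piece0 (by linarith) (by linarith)
  rcases le_or_gt a (26/10) with h' | h'
  · exact piece1 (by linarith) (by linarith)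
  rcases le_or_gt a (28/10) with h'' | h''
  · exact piece2 (by linarith) (by linarith)
  rcases le_or_gt a (30/10) with h3 | h3
  · exact piece3 (by linarith) (by linarith)
  rcases le_or_gt a (32/10) with h4 | h4
  · exact piece4 (by linarith) (by linarith)
  exact piece5 (by linarith) (by linarith)

lemma L2 {a : ℝ} (h0 : 0 < a) (h1 : a ≤ (22/10 : ℝ)) : a ≤ Real.exp ((1 - 2/π) * a) := by
  have hal := alpha_lo
  have hx : (0:ℝ) ≤ (1 - 2/π) * a := by nlinarith
  have ht := taylor5 hx
  set x := (1 - 2/π) * a with hxdef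
  have hy : 36338009/100000000 * a ≤ x := by rw [hxdef]; nlinarith
  have hy0 : (0:ℝ) ≤ 36338009/100000000 * a := by positivity
  have p2 : (36338009/100000000 * a)^2 ≤ x^2 := pow_le_pow_left₀ hy0 hy 2
  have p3 : (36338009/100000000 * a)^3 ≤ x^3 := pow_le_pow_left₀ hy0 hy 3
  have p4 : (36338009/100000000 * a)^4 ≤ x^4 := pow_le_pow_left₀ hy0 hy 4
  have key : a ≤ 1 + 36338009/100000000 * a + (36338009/100000000 * a)^2/2
      + (36338009/100000000 * a)^3/6 + (36338009/100000000 * a)^4/24 := by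
    nlinarith [sq_nonneg a, sq_nonneg (a - 22/10), mul_nonneg h0.le h0.le,
      mul_nonneg (mul_nonneg h0.le h0.le) h0.le,
      mul_nonneg (mul_nonneg (mul_nonneg h0.le h0.le) h0.le) h0.le,
      mul_nonneg (mul_nonneg h0.le h0.le) (sub_nonneg.mpr h1),
      mul_nonneg (mul_nonneg (mul_nonneg h0.le h0.le) h0.le) (sub_nonneg.mpr h1)]
  linarith

lemma ea33 : (33173097/10000000 : ℝ) ≤ Real.exp ((1 - 2/π) * (33/10)) := by
  have h1 : (5995771/5000000 : ℝ) ≤ (1 - 2/π) * (33/10) := by nlinarith [alpha_lo]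
  refine le_trans ?_ (Real.exp_le_exp.mpr h1)
  have h2 := taylor11 (show (0:ℝ) ≤ (5995771/5000000 : ℝ) by norm_num)
  nlinarith [h2]

lemma L3 {a : ℝ} (h1 : (33/10 : ℝ) ≤ a) : a ≤ Real.exp ((1 - 2/π) * a) := by
  have hal := alpha_lo
  have hd0 : (0:ℝ) ≤ a - 33/10 := by linarith
  have eA : Real.exp ((1 - 2/π) * a)
      = Real.exp ((1 - 2/π) * (33/10)) * Real.exp ((1 - 2/π) * (a - 33/10)) := by
    rw [← Real.exp_add]; congr 1; ring
  have tA : (1:ℝ) + 36338009/100000000 * (a - 33/10) ≤ Real.exp ((1 - 2/π) * (a - 33/10)) := by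
    have hm := mul_le_mul_of_nonneg_right alpha_lo hd0
    have h := Real.add_one_le_exp ((1 - 2/π) * (a - 33/10))
    linarith [hm, h]
  have lA : (33173097/10000000 : ℝ) * (1 + 36338009/100000000 * (a - 33/10)) ≤ Real.exp ((1 - 2/π) * a) := by
    rw [eA]
    have := mul_le_mul (ea33) tA (by nlinarith) (Real.exp_pos _).le
    linarith
  linarith [lA]

lemma keyK {a : ℝ} (ha : 0 < a) : a * Real.sinh (2/π * a) ≤ Real.sinh a := by
  have h0 := Real.pi_pos
  have hal := alpha_lo
  rw [Real.sinh_eq, Real.sinh_eq]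
  have e1 : Real.exp (2/π * a) * Real.exp ((1 - 2/π) * a) = Real.exp a := by
    rw [← Real.exp_add]; congr 1; ring
  rcases le_or_gt a (Real.exp ((1 - 2/π) * a)) with hcase | hcase
  · have e2 : Real.exp (-(2/π * a)) * Real.exp (-((1 - 2/π) * a)) = Real.exp (-a) := by
      rw [← Real.exp_add]; congr 1; ring
    have hC : Real.exp (-(2/π * a)) ≤ Real.exp (2/π * a) := by
      apply Real.exp_le_exp.mpr
      have hp : (0:ℝ) ≤ 2/π * a := by positivity
      linarith
    have hV : Real.exp (-((1 - 2/π) * a)) ≤ Real.exp ((1 - 2/π) * a) := by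
      apply Real.exp_le_exp.mpr
      have hp : (0:ℝ) ≤ 36338009/100000000 * a := by positivity
      have hm := mul_le_mul_of_nonneg_right hal ha.le
      linarith
    have key : (Real.exp a - Real.exp (-a))
        - a * (Real.exp (2/π * a) - Real.exp (-(2/π * a)))
        = (Real.exp (2/π * a) - Real.exp (-(2/π * a))) * (Real.exp ((1 - 2/π) * a) - a)
          + Real.exp (-(2/π * a)) * (Real.exp ((1 - 2/π) * a) - Real.exp (-((1 - 2/π) * a))) := by
      linear_combination (-1 : ℝ) * e1 + e2
    linarith [mul_nonneg (sub_nonneg.mpr hC) (sub_nonneg.mpr hcase),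
      mul_nonneg (Real.exp_pos (-(2/π * a))).le (sub_nonneg.mpr hV), key]
  · have h22 : (22/10 : ℝ) ≤ a := by
      by_contra hc
      push_neg at hc
      exact absurd (L2 ha hc.le) (by linarith)
    have h33 : a ≤ (33/10 : ℝ) := by
      by_contra hc
      push_neg at hc
      exact absurd (L3 hc.le) (by linarith)
    have hF := Flem h22 h33
    have e2 : Real.exp (2/π * a) * Real.exp (-((6/π - 1) * a)) = Real.exp ((1 - 4/π) * a) := by
      rw [← Real.exp_add]; congr 1; ring
    have e3 : Real.exp (2/π * a) * Real.exp (-((1 + 2/π) * a)) = Real.exp (-a) := by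
      rw [← Real.exp_add]; congr 1; ring
    have e4 : Real.exp (-(2/π * a)) * Real.exp ((1 - 2/π) * a) = Real.exp ((1 - 4/π) * a) := by
      rw [← Real.exp_add]; congr 1; ring
    have key : (Real.exp a - Real.exp (-a))
        - a * (Real.exp (2/π * a) - Real.exp (-(2/π * a)))
        = Real.exp (2/π * a) * (Real.exp ((1 - 2/π) * a) + Real.exp (-((6/π - 1) * a))
            - Real.exp (-((1 + 2/π) * a)) - a)
          + Real.exp (-(2/π * a)) * (a - Real.exp ((1 - 2/π) * a)) := by
      linear_combination (-1 : ℝ) * e1 - e2 + e3 + e4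
    linarith [mul_nonneg (Real.exp_pos (2/π * a)).le (sub_nonneg.mpr hF),
      mul_nonneg (Real.exp_pos (-(2/π * a))).le (sub_nonneg.mpr hcase.le), key]

end Stmt10Aux

theorem stmt10 : ∀ x : ℝ, 0 < x →
    Real.arsinh x ≤ (π / 2) * Real.arsinh (qf x) := by
  intro x hx
  have h0 := Real.pi_pos
  have ha : 0 < Real.arsinh x := Real.arsinh_pos_iff.mpr hx
  have hq : qf x = Real.sinh (Real.arsinh x) / Real.arsinh x := by
    rw [qf, Real.sinh_arsinh]
  have hK := Stmt10Aux.keyK ha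
  have h1 : Real.sinh (2/π * Real.arsinh x) ≤ Real.sinh (Real.arsinh x) / Real.arsinh x := by
    rw [le_div_iff₀ ha]; linarith [hK]
  have h2 : 2/π * Real.arsinh x ≤ Real.arsinh (qf x) := by
    rw [hq, ← Real.arsinh_sinh (2/π * Real.arsinh x)]
    exact Real.arsinh_le_arsinh.mpr h1
  have h3 : π/2 * (2/π * Real.arsinh x) ≤ π/2 * Real.arsinh (qf x) := by
    apply mul_le_mul_of_nonneg_left h2; positivity
  have h4 : π/2 * (2/π * Real.arsinh x) = Real.arsinh x := by
    field_simp
  linarith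
end

section
/- Let h > 0, β > 0, and let N be a nonnegative integer. Then ∑_{k=N+1}^{∞} e^{−πβ·sinh(kh)} ≤ e^{−πβ·sinh(Nh)}/( πβ·h·cosh(Nh) ). -/
open Real

lemma sinh_lower_s12 (a b : ℝ) (ha : 0 ≤ a) (hab : a ≤ b) :
    Real.sinh a + (b - a) * Real.cosh a ≤ Real.sinh b := by
  have key : Real.sinh b - Real.sinh a = 2 * Real.cosh ((b + a) / 2) * Real.sinh ((b - a) / 2) := by
    have h1 : b = (b + a) / 2 + (b - a) / 2 := by ring
    have h2 : a = (b + a) / 2 - (b - a) / 2 := by ring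
    rw [h1, h2] at *
    rw [Real.sinh_add, Real.sinh_sub]; ring_nf
  have hy : (b - a) / 2 ≤ Real.sinh ((b - a) / 2) :=
    (Real.self_le_sinh_iff).mpr (by linarith)
  have hx : Real.cosh a ≤ Real.cosh ((b + a) / 2) := by
    rw [Real.cosh_le_cosh]
    rw [abs_of_nonneg ha, abs_of_nonneg (by linarith)]
    linarith
  have hsy : 0 ≤ Real.sinh ((b - a) / 2) := Real.sinh_nonneg_iff.mpr (by linarith)
  have hca : 0 < Real.cosh a := Real.cosh_pos a
  nlinarith [mul_le_mul hx hy (by linarith) (Real.cosh_pos ((b + a) / 2)).le]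

def tailEquiv (N : ℕ) : ℕ ≃ {k : ℕ // N + 1 ≤ k} where
  toFun n := ⟨N + 1 + n, Nat.le_add_right _ _⟩
  invFun k := k.1 - (N + 1)
  left_inv n := by simp
  right_inv k := by
    ext
    have := k.2
    simp
    omega

theorem stmt12 (h β : ℝ) (hh : 0 < h) (hβ : 0 < β) (N : ℕ) :
    (∑' k : {k : ℕ // N + 1 ≤ k}, Real.exp (-(π * β * Real.sinh ((k : ℝ) * h)))) ≤
      Real.exp (-(π * β * Real.sinh (N * h))) / (π * β * h * Real.cosh (N * h)) := by
  have hπ : 0 < π := Real.pi_pos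
  set c : ℝ := π * β * h * Real.cosh (N * h) with hc
  have hc0 : 0 < c := by positivity
  set r : ℝ := Real.exp (-c) with hrdef
  have hr0 : 0 < r := Real.exp_pos _
  have hr1 : r < 1 := Real.exp_lt_one_iff.mpr (by linarith)
  set A : ℝ := Real.exp (-(π * β * Real.sinh (N * h))) with hA
  have hA0 : 0 < A := Real.exp_pos _
  -- key pointwise bound
  have key : ∀ n : ℕ, Real.exp (-(π * β * Real.sinh ((N + 1 + n : ℕ) * h)))
      ≤ (A * r) * r ^ n := by
    intro n
    have hab : (N : ℝ) * h ≤ ((N + 1 + n : ℕ) : ℝ) * h := by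
      have : (N : ℝ) ≤ ((N + 1 + n : ℕ) : ℝ) := by push_cast; linarith
      exact mul_le_mul_of_nonneg_right this hh.le
    have hs := sinh_lower_s12 ((N : ℝ) * h) (((N + 1 + n : ℕ) : ℝ) * h)
      (by positivity) hab
    have hdiff : (((N + 1 + n : ℕ) : ℝ) * h - (N : ℝ) * h) = (n + 1 : ℝ) * h := by
      push_cast; ring
    rw [hdiff] at hs
    have : -(π * β * Real.sinh (((N + 1 + n : ℕ) : ℝ) * h))
        ≤ -(π * β * Real.sinh ((N : ℝ) * h)) + -((n + 1 : ℝ) * c) := by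
      have hpb : 0 < π * β := by positivity
      nlinarith [Real.cosh_pos (x := (N : ℝ) * h)]
    calc Real.exp (-(π * β * Real.sinh ((N + 1 + n : ℕ) * h)))
        ≤ Real.exp (-(π * β * Real.sinh ((N : ℝ) * h)) + -((n + 1 : ℝ) * c)) :=
          Real.exp_le_exp.mpr this
      _ = (A * r) * r ^ n := by
          rw [hA, hrdef, ← Real.exp_nat_mul, ← Real.exp_add, ← Real.exp_add]
          congr 1
          ring_nf
  -- reindex
  set e := tailEquiv N with hedef
  have he : ∀ n : ℕ, ((e n : {k : ℕ // N + 1 ≤ k}) : ℕ) = N + 1 + n := fun n => rfl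
  rw [← e.tsum_eq]
  simp only [he]
  have hsum_g : Summable (fun n : ℕ => (A * r) * r ^ n) :=
    (summable_geometric_of_lt_one hr0.le hr1).mul_left _
  have hsum_f : Summable (fun n : ℕ =>
      Real.exp (-(π * β * Real.sinh ((N + 1 + n : ℕ) * h)))) :=
    Summable.of_nonneg_of_le (fun n => (Real.exp_pos _).le) key hsum_g
  calc (∑' n : ℕ, Real.exp (-(π * β * Real.sinh ((N + 1 + n : ℕ) * h))))
      ≤ ∑' n : ℕ, (A * r) * r ^ n := Summable.tsum_le_tsum (fun n => key n) hsum_f hsum_g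
    _ = (A * r) * (1 - r)⁻¹ := by
        rw [tsum_mul_left, tsum_geometric_of_lt_one hr0.le hr1]
    _ ≤ A / c := by
        have h1r : 0 < 1 - r := by linarith
        have hcr : c * r ≤ 1 - r := by
          have h1 := Real.add_one_le_exp c
          have hrc : r * Real.exp c = 1 := by
            rw [hrdef, ← Real.exp_add]; simp
          nlinarith [Real.exp_pos c]
        have hfrac : r / (1 - r) ≤ 1 / c := by
          rw [div_le_div_iff₀ h1r hc0]
          nlinarith
        rw [div_eq_mul_inv, mul_assoc]
        apply mul_le_mul_of_nonneg_left _ hA0.le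
        calc r * (1 - r)⁻¹ = r / (1 - r) := by rw [div_eq_mul_inv]
          _ ≤ 1 / c := hfrac
          _ = c⁻¹ := one_div c
end

section
/- Let R, α, β be positive constants with μ = min{α,β}, let d > 0, and let F : ℝ → ℂ satisfy |F(x)| ≤ R/((1+e^{−π sinh x})^α · (1+e^{π sinh x})^β) for all x ∈ ℝ. Let h > 0, let n be a positive integer, and set N = ⌈(1/h)·arsinh((μ/β)·q(dn/μ))⌉. Then ∑_{k=N+1}^{∞} |F(kh)| ≤ [ R/( πμh·√(1 + q(dn/μ)²) ) ]·e^{−πμ·q(dn/μ)}. -/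
set_option maxHeartbeats 1000000

open Real

/-- Equivalence between `ℕ` and integers `≥ N+1`. -/
def intTailEquiv (N : ℤ) : ℕ ≃ {k : ℤ // N + 1 ≤ k} where
  toFun j := ⟨N + 1 + j, by omega⟩
  invFun k := (k.1 - (N + 1)).toNat
  left_inv j := by simp
  right_inv k := by
    have := k.2
    ext
    simp only
    omega

theorem stmt13 (R α β d : ℝ) (hR : 0 < R) (hα : 0 < α) (hβ : 0 < β) (hd : 0 < d)
    (μ : ℝ) (hμ : μ = min α β)
    (F : ℝ → ℂ)
    (hF : ∀ x : ℝ, ‖F x‖ ≤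
      R / ((1 + Real.exp (-(π * Real.sinh x))) ^ α * (1 + Real.exp (π * Real.sinh x)) ^ β))
    (h : ℝ) (hh : 0 < h) (n : ℕ) (hn : 0 < n)
    (N : ℤ) (hN : N = ⌈(1 / h) * Real.arsinh ((μ / β) * qf (d * n / μ))⌉) :
    (∑' k : {k : ℤ // N + 1 ≤ k}, ‖F ((k : ℝ) * h)‖) ≤
      (R / (π * μ * h * Real.sqrt (1 + qf (d * n / μ) ^ 2))) *
        Real.exp (-(π * μ * qf (d * n / μ))) := by
  have hμ0 : 0 < μ := by rw [hμ]; exact lt_min hα hβ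
  have hμβ : μ ≤ β := hμ ▸ min_le_right _ _
  have hn' : (0:ℝ) < n := by exact_mod_cast hn
  have hx0 : (0:ℝ) < d * n / μ := by positivity
  set q : ℝ := qf (d * n / μ) with hqdef
  have hq0 : 0 < q := by
    rw [hqdef, qf]
    exact div_pos hx0 (Real.arsinh_pos_iff.mpr hx0)
  set a : ℝ := Real.arsinh ((μ / β) * q) with hadef
  have ha0 : 0 < a := Real.arsinh_pos_iff.mpr (by positivity)
  -- N * h ≥ a
  have hNa : a ≤ (N : ℝ) * h := by
    have h1 : (1 / h) * a ≤ (N : ℝ) := by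
      rw [hN]; exact Int.le_ceil _
    have := mul_le_mul_of_nonneg_right h1 hh.le
    rw [one_div, inv_mul_eq_div, div_mul_cancel₀ _ hh.ne'] at this
    exact this
  set s : ℝ := Real.sinh ((N : ℝ) * h) with hsdef
  set c : ℝ := Real.cosh ((N : ℝ) * h) with hcdef
  have hc0 : 0 < c := Real.cosh_pos _
  have hs1 : (μ / β) * q ≤ s := by
    rw [hsdef, ← Real.sinh_arsinh ((μ / β) * q)]
    exact Real.sinh_le_sinh.mpr hNa
  have hsμq : μ * q ≤ β * s := by
    have h2 := mul_le_mul_of_nonneg_left hs1 hβ.le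
    have h3 : β * (μ / β * q) = μ * q := by field_simp
    linarith
  have hs0 : 0 ≤ s := by nlinarith
  -- cosh bound
  have hsqX : Real.sqrt (1 + q ^ 2) ^ 2 = 1 + q ^ 2 := Real.sq_sqrt (by positivity)
  have hcsq : c ^ 2 = s ^ 2 + 1 := Real.cosh_sq _
  have hXnn : 0 ≤ Real.sqrt (1 + q ^ 2) := Real.sqrt_nonneg _
  have hcosh : μ * Real.sqrt (1 + q ^ 2) ≤ β * c := by
    have h1 : μ ^ 2 ≤ β ^ 2 := by nlinarith
    have h2 : (μ * q) ^ 2 ≤ (β * s) ^ 2 := by nlinarith [mul_nonneg hμ0.le hq0.le]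
    have key : (μ * Real.sqrt (1 + q ^ 2)) ^ 2 ≤ (β * c) ^ 2 := by nlinarith
    have h4 := Real.sqrt_le_sqrt key
    rwa [Real.sqrt_sq (by positivity), Real.sqrt_sq (by positivity)] at h4
  -- pointwise bound on F
  have hFb : ∀ x : ℝ, ‖F x‖ ≤ R * Real.exp (-(π * β * Real.sinh x)) := by
    intro x
    refine (hF x).trans ?_
    have he1 : (0:ℝ) < Real.exp (-(π * Real.sinh x)) := Real.exp_pos _
    have he2 : (0:ℝ) < Real.exp (π * Real.sinh x) := Real.exp_pos _
    have h1 : (1:ℝ) ≤ (1 + Real.exp (-(π * Real.sinh x))) ^ α :=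
      Real.one_le_rpow (by linarith) hα.le
    have h2 : Real.exp (π * β * Real.sinh x) ≤ (1 + Real.exp (π * Real.sinh x)) ^ β := by
      calc Real.exp (π * β * Real.sinh x) = Real.exp (π * Real.sinh x) ^ β := by
            rw [← Real.exp_log he2, ← Real.exp_mul, Real.log_exp]; ring_nf
      _ ≤ _ := Real.rpow_le_rpow he2.le (by linarith) hβ.le
    have hE : (0:ℝ) < Real.exp (π * β * Real.sinh x) := Real.exp_pos _
    have hD : Real.exp (π * β * Real.sinh x) ≤
        (1 + Real.exp (-(π * Real.sinh x))) ^ α * (1 + Real.exp (π * Real.sinh x)) ^ β := by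
      nlinarith [Real.rpow_nonneg
        (le_of_lt (by linarith : (0:ℝ) < 1 + Real.exp (π * Real.sinh x))) β]
    rw [show R * Real.exp (-(π * β * Real.sinh x)) = R / Real.exp (π * β * Real.sinh x) by
      rw [Real.exp_neg]; ring]
    exact div_le_div_of_nonneg_left hR.le hE hD
  -- geometric ratio
  set r : ℝ := Real.exp (-(π * β * h * c)) with hrdef
  have hr0 : 0 < r := Real.exp_pos _
  have hr1 : r < 1 := by
    rw [hrdef, Real.exp_lt_one_iff]
    have : 0 < π * β * h * c := by positivity
    linarith
  have hπβ : 0 < π * β := by positivity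
  -- the per-term bound
  have hterm : ∀ j : ℕ,
      ‖F (((N + 1 + (j:ℤ) : ℤ) : ℝ) * h)‖ ≤
        (R * Real.exp (-(π * β * s)) * r) * r ^ j := by
    intro j
    refine (hFb _).trans ?_
    have hsinh : s + ((j:ℝ) + 1) * h * c ≤ Real.sinh (((N + 1 + (j:ℤ) : ℤ) : ℝ) * h) := by
      have hrw : ((N + 1 + (j:ℤ) : ℤ) : ℝ) * h = (N : ℝ) * h + ((j:ℝ) + 1) * h := by
        push_cast; ring
      rw [hrw, Real.sinh_add]
      have hu0 : 0 < ((j:ℝ) + 1) * h := by positivity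
      have h3 : ((j:ℝ) + 1) * h ≤ Real.sinh (((j:ℝ) + 1) * h) :=
        Real.self_le_sinh_iff.mpr hu0.le
      have h4 : (1:ℝ) ≤ Real.cosh (((j:ℝ) + 1) * h) := Real.one_le_cosh _
      nlinarith
    have hexp : Real.exp (-(π * β * Real.sinh (((N + 1 + (j:ℤ) : ℤ) : ℝ) * h))) ≤
        Real.exp (-(π * β * (s + ((j:ℝ) + 1) * h * c))) := by
      apply Real.exp_le_exp.mpr
      have := mul_le_mul_of_nonneg_left hsinh hπβ.le
      nlinarith
    have heq : Real.exp (-(π * β * (s + ((j:ℝ) + 1) * h * c))) =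
        Real.exp (-(π * β * s)) * r * r ^ j := by
      rw [hrdef, ← Real.exp_nat_mul, ← Real.exp_add, ← Real.exp_add]
      congr 1
      push_cast
      ring
    calc R * Real.exp (-(π * β * Real.sinh (((N + 1 + (j:ℤ) : ℤ) : ℝ) * h)))
        ≤ R * Real.exp (-(π * β * (s + ((j:ℝ) + 1) * h * c))) :=
          mul_le_mul_of_nonneg_left hexp hR.le
      _ = (R * Real.exp (-(π * β * s)) * r) * r ^ j := by rw [heq]; ring
  -- summability of the geometric bound
  have hgsum : Summable (fun j : ℕ => (R * Real.exp (-(π * β * s)) * r) * r ^ j) :=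
    (summable_geometric_of_lt_one hr0.le hr1).mul_left _
  have hfsum : Summable (fun j : ℕ =>
      ‖F (((N + 1 + (j:ℤ) : ℤ) : ℝ) * h)‖) :=
    Summable.of_nonneg_of_le (fun j => norm_nonneg _) hterm hgsum
  -- reindex
  have hkey : (∑' k : {k : ℤ // N + 1 ≤ k}, ‖F ((k : ℝ) * h)‖) =
      ∑' j : ℕ, ‖F (((N + 1 + (j:ℤ) : ℤ) : ℝ) * h)‖ :=
    ((intTailEquiv N).tsum_eq
      (fun k : {k : ℤ // N + 1 ≤ k} => ‖F ((k : ℝ) * h)‖)).symm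
  rw [hkey]
  have hsum1 : (∑' j : ℕ, ‖F (((N + 1 + (j:ℤ) : ℤ) : ℝ) * h)‖) ≤
      (R * Real.exp (-(π * β * s)) * r) * (1 - r)⁻¹ := by
    calc (∑' j : ℕ, ‖F (((N + 1 + (j:ℤ) : ℤ) : ℝ) * h)‖)
        ≤ ∑' j : ℕ, (R * Real.exp (-(π * β * s)) * r) * r ^ j :=
          Summable.tsum_le_tsum hterm hfsum hgsum
      _ = (R * Real.exp (-(π * β * s)) * r) * (1 - r)⁻¹ := by
          rw [tsum_mul_left, tsum_geometric_of_lt_one hr0.le hr1]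
  refine hsum1.trans ?_
  -- geometric tail ≤ 1/(π β h c)
  set t : ℝ := π * β * h * c with htdef
  have ht0 : 0 < t := by positivity
  have hrt : r * Real.exp t = 1 := by
    rw [hrdef, htdef, ← Real.exp_add]; simp
  have h1r : 0 < 1 - r := by linarith
  have hgeo : r * (1 - r)⁻¹ ≤ t⁻¹ := by
    have h5 := Real.add_one_le_exp t
    have hdl : r / (1 - r) ≤ 1 / t := by
      rw [div_le_div_iff₀ h1r ht0]
      nlinarith [mul_le_mul_of_nonneg_left h5 hr0.le]
    rw [← div_eq_mul_inv, ← one_div t]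
    exact hdl
  have hstep1 : (R * Real.exp (-(π * β * s)) * r) * (1 - r)⁻¹ ≤
      R * Real.exp (-(π * β * s)) / t := by
    rw [div_eq_mul_inv, mul_assoc]
    exact mul_le_mul_of_nonneg_left hgeo (by positivity)
  refine hstep1.trans ?_
  -- final comparison
  have hexp2 : Real.exp (-(π * β * s)) ≤ Real.exp (-(π * μ * q)) := by
    apply Real.exp_le_exp.mpr
    have := mul_le_mul_of_nonneg_left hsμq pi_pos.le
    nlinarith
  have hden : π * μ * h * Real.sqrt (1 + q ^ 2) ≤ t := by
    have h6 := mul_le_mul_of_nonneg_left hcosh (mul_pos pi_pos hh).le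
    rw [htdef]
    nlinarith
  have hX0 : 0 < Real.sqrt (1 + q ^ 2) := Real.sqrt_pos.mpr (by positivity)
  have hdpos : 0 < π * μ * h * Real.sqrt (1 + q ^ 2) := by positivity
  calc R * Real.exp (-(π * β * s)) / t
      ≤ R * Real.exp (-(π * μ * q)) / (π * μ * h * Real.sqrt (1 + q ^ 2)) :=
        div_le_div₀ (by positivity)
          (mul_le_mul_of_nonneg_left hexp2 hR.le) hdpos hden
    _ = (R / (π * μ * h * Real.sqrt (1 + q ^ 2))) * Real.exp (-(π * μ * q)) := by
        ring
end
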